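/- arXiv:2102.06426 — 12 statements merged into one kernel-verified Lean document; each statement's English description precedes it below -/
import Mathlib

section
/- Let I be a squarefree stable ideal of S = K[x_1,…,x_n] and let k, ℓ be positive integers. Then β_{k,k+ℓ}(I) is an extremal Betti number of I if and only if G(I)_ℓ ≠ ∅ with k + ℓ = max{m(u) : u ∈ G(I)_ℓ}, and m(u) < k + j for all j > ℓ and all u ∈ G(I)_j. -/
open Finset

noncomputable section

/-- `m(u)`: the maximal index in the support of a squarefree monomial `u`,
where a squarefree monomial of `K[x_1,…,x_n]` is identified with its support,
a finite set of variable indices (`m(1) = 0`). -/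
def mmax (u : Finset ℕ) : ℕ := u.sup id

/-- A squarefree monomial ideal of `K[x_1,…,x_n]`, identified with the (finite) set of
squarefree monomials belonging to it: it is upward closed under divisibility of
squarefree monomials, i.e. under taking supersets inside `{1,…,n}`. -/
def IsSqIdeal (n : ℕ) (I : Finset (Finset ℕ)) : Prop :=
  (∀ u ∈ I, u ⊆ Finset.Icc 1 n) ∧
    ∀ u ∈ I, ∀ v, u ⊆ v → v ⊆ Finset.Icc 1 n → v ∈ I

/-- `G(I)`: the minimal monomial generators of a squarefree monomial ideal. -/
def gens (I : Finset (Finset ℕ)) : Finset (Finset ℕ) :=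
  I.filter fun u => ∀ v ∈ I, v ⊆ u → v = u

/-- `G(I)_ℓ`: the degree-`ℓ` minimal generators. -/
def gensDeg (I : Finset (Finset ℕ)) (l : ℕ) : Finset (Finset ℕ) :=
  (gens I).filter fun u => u.card = l

/-- The graded Betti number `β_{k,k+ℓ}(I)` of a squarefree stable ideal, given by the
Aramova–Herzog–Hibi formula (taken as the definition). -/
def betti (I : Finset (Finset ℕ)) (k l : ℕ) : ℕ :=
  ∑ u ∈ gensDeg I l, (mmax u - l).choose k

/-- `β_{k,k+ℓ}(I)` is an extremal Betti number. -/
def IsExtremal (I : Finset (Finset ℕ)) (k l : ℕ) : Prop :=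
  betti I k l ≠ 0 ∧ ∀ i j, k ≤ i → l ≤ j → (i, j) ≠ (k, l) → betti I i j = 0

/-- `C(I)`: the set of corners of `I`. -/
def corners (I : Finset (Finset ℕ)) : Set (ℕ × ℕ) :=
  {p | IsExtremal I p.1 p.2}

/-- squarefree stable ideal. -/
def IsSqStable (n : ℕ) (I : Finset (Finset ℕ)) : Prop :=
  IsSqIdeal n I ∧
    ∀ u ∈ gens I, ∀ j, 1 ≤ j → j < mmax u → j ∉ u →
      insert j (u.erase (mmax u)) ∈ I

/-- squarefree strongly stable ideal. -/
def IsSqStronglyStable (n : ℕ) (I : Finset (Finset ℕ)) : Prop :=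
  IsSqIdeal n I ∧
    ∀ u ∈ gens I, ∀ i ∈ u, ∀ j, 1 ≤ j → j < i → j ∉ u →
      insert j (u.erase i) ∈ I

/-- `u >_slex v` for squarefree monomials of the same degree: at the first position where
the increasing index sequences differ, `u` has the smaller index; equivalently the least
element of the symmetric difference belongs to `u`. -/
def slexGT (u v : Finset ℕ) : Prop :=
  u ≠ v ∧ sInf {a : ℕ | a ∈ symmDiff u v} ∈ u

/-- `u ≥_slex v`. -/
def slexGE (u v : Finset ℕ) : Prop := u = v ∨ slexGT u v

/-- `A^s(k,ℓ)`: the squarefree monomials of `K[x_1,…,x_n]` of degree `ℓ` with `m(u) = k+ℓ`. -/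
def Asf (n k l : ℕ) : Finset (Finset ℕ) :=
  (Finset.Icc 1 n).powerset.filter fun u => u.card = l ∧ mmax u = k + l

/-- The set of gaps of a squarefree monomial `u`, recorded by the element of `u`
immediately preceding each gap. -/
def gapSet (u : Finset ℕ) : Finset ℕ :=
  u.filter fun a => a < mmax u ∧ a + 1 ∉ u

/-- The width of the gap of `u` starting right after `a`. -/
def gapWidth (u : Finset ℕ) (a : ℕ) : ℕ :=
  sInf {b : ℕ | b ∈ u ∧ a < b} - a - 1

/-- The squarefree shadow of a set `T` of squarefree monomials:
`Shad(T) = {x_i u : u ∈ T, i ∉ supp u, i = 1,…,n}`. -/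
def shadS (n : ℕ) (T : Set (Finset ℕ)) : Set (Finset ℕ) :=
  {v | ∃ u ∈ T, ∃ i, i ∈ Finset.Icc 1 n ∧ i ∉ u ∧ v = insert i u}

/-- A squarefree strongly stable set of squarefree monomials. -/
def IsSSSetS (T : Set (Finset ℕ)) : Prop :=
  ∀ u ∈ T, ∀ i ∈ u, ∀ j, 1 ≤ j → j < i → j ∉ u → insert j (u.erase i) ∈ T

/-- Membership in `B(u_1,…,u_r)`, the smallest squarefree strongly stable set
containing the monomials of `U`. -/
inductive BMem (U : Finset (Finset ℕ)) : Finset ℕ → Prop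
  | base : ∀ u ∈ U, BMem U u
  | step : ∀ u, BMem U u → ∀ i ∈ u, ∀ j, 1 ≤ j → j < i → j ∉ u →
      BMem U (insert j (u.erase i))

/-- `BShad(u_1,…,u_r)_{(k₂,ℓ₂)}` for monomials `u_1,…,u_r` of degree `ℓ₁`:
the elements of `Shad^{ℓ₂-ℓ₁}(B(u_1,…,u_r))` with `m(v) ≤ k₂+ℓ₂`. -/
def bshad (n l1 k2 l2 : ℕ) (U : Finset (Finset ℕ)) : Set (Finset ℕ) :=
  {v | v ∈ (shadS n)^[l2 - l1] {u | BMem U u} ∧ mmax v ≤ k2 + l2}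

/-- squarefree lexsegment ideal. -/
def IsSqLex (n : ℕ) (I : Finset (Finset ℕ)) : Prop :=
  IsSqIdeal n I ∧
    ∀ u ∈ I, ∀ v, v ⊆ Finset.Icc 1 n → v.card = u.card → slexGT v u → v ∈ I

/-- Characterization of extremal Betti numbers of squarefree stable ideals:
for a squarefree stable ideal `I` of `K[x_1,…,x_n]` and positive integers `k, ℓ`,
`β_{k,k+ℓ}(I)` is extremal iff `G(I)_ℓ ≠ ∅` with `k+ℓ = max{m(u) : u ∈ G(I)_ℓ}` and
`m(u) < k + j` for all `j > ℓ` and all `u ∈ G(I)_j`. -/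
theorem extremal_iff_of_sqStable (n k l : ℕ) (hk : 1 ≤ k) (hl : 1 ≤ l)
    (I : Finset (Finset ℕ)) (hI : IsSqStable n I) :
    IsExtremal I k l ↔
      (gensDeg I l).Nonempty ∧ (gensDeg I l).sup mmax = k + l ∧
        ∀ j, l < j → ∀ u ∈ gensDeg I j, mmax u < k + j := by
  constructor
  · rintro ⟨hne, hvan⟩
    unfold betti at hne
    obtain ⟨u, hu, hcu⟩ : ∃ u ∈ gensDeg I l, (mmax u - l).choose k ≠ 0 := by
      by_contra h
      push_neg at h
      exact hne (Finset.sum_eq_zero fun v hv => h v hv)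
    have hmu : k + l ≤ mmax u := by
      by_contra h
      exact hcu (Nat.choose_eq_zero_of_lt (by omega))
    have hub : ∀ v ∈ gensDeg I l, mmax v ≤ k + l := by
      intro v hv
      have h0 : betti I (k+1) l = 0 := hvan (k+1) l (by omega) le_rfl (by simp)
      unfold betti at h0
      have := Nat.choose_eq_zero_iff.mp ((Finset.sum_eq_zero_iff.mp h0) v hv)
      omega
    refine ⟨⟨u, hu⟩, le_antisymm (Finset.sup_le hub)
      (le_trans hmu (Finset.le_sup hu)), ?_⟩
    intro j hj v hv
    have h0 : betti I k j = 0 := hvan k j le_rfl (le_of_lt hj)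
      (by simp only [ne_eq, Prod.mk.injEq, not_and]; omega)
    unfold betti at h0
    have := Nat.choose_eq_zero_iff.mp ((Finset.sum_eq_zero_iff.mp h0) v hv)
    omega
  · rintro ⟨hne, hsup, hbig⟩
    obtain ⟨w, hw, hws⟩ := Finset.exists_mem_eq_sup _ hne mmax
    constructor
    · intro h0
      unfold betti at h0
      have hterm := (Finset.sum_eq_zero_iff.mp h0) w hw
      rw [← hws, hsup] at hterm
      simp [Nat.add_sub_cancel] at hterm
    · intro i j hi hj hnep
      unfold betti
      apply Finset.sum_eq_zero
      intro v hv
      rcases eq_or_lt_of_le hj with hjl | hjl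
      · subst hjl
        have hik : k < i := by
          rcases eq_or_lt_of_le hi with h | h
          · exact absurd (by rw [h]) hnep
          · exact h
        have hle : mmax v ≤ k + l := by
          have := Finset.le_sup (f := mmax) hv
          rwa [hsup] at this
        exact Nat.choose_eq_zero_of_lt (by omega)
      · have := hbig j hjl v hv
        exact Nat.choose_eq_zero_of_lt (by omega)
end
end

section
/- Let I be a squarefree stable ideal of S = K[x_1,…,x_n]. If β_{k,k+ℓ}(I) is an extremal Betti number of I, then β_{k,k+ℓ}(I) = |{u ∈ G(I)_ℓ : m(u) = k+ℓ}|. -/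
open Finset

noncomputable section

/-- if `β_{k,k+ℓ}(I)` is an extremal Betti number of a squarefree stable
ideal `I`, then `β_{k,k+ℓ}(I) = |{u ∈ G(I)_ℓ : m(u) = k+ℓ}|`. -/
theorem betti_eq_card_of_extremal (n k l : ℕ) (I : Finset (Finset ℕ))
    (hI : IsSqStable n I) (h : IsExtremal I k l) :
    betti I k l = ((gensDeg I l).filter fun u => mmax u = k + l).card := by
  have h0 : betti I (k + 1) l = 0 := h.2 (k + 1) l (Nat.le_succ k) le_rfl (by simp)
  have hz : ∀ u ∈ gensDeg I l, (mmax u - l).choose (k + 1) = 0 := by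
    intro u hu
    exact Finset.sum_eq_zero_iff.mp h0 u hu
  unfold betti
  rw [Finset.card_filter]
  apply Finset.sum_congr rfl
  intro u hu
  -- l ≤ mmax u
  have hmem : u ∈ I := (Finset.mem_filter.mp ((Finset.mem_filter.mp hu).1)).1
  have hcard : u.card = l := (Finset.mem_filter.mp hu).2
  have hsub : u ⊆ Finset.Icc 1 (mmax u) := by
    intro a ha
    have h1 : 1 ≤ a := (Finset.mem_Icc.mp (hI.1.1 u hmem ha)).1
    exact Finset.mem_Icc.mpr ⟨h1, Finset.le_sup (f := id) ha⟩
  have hlm : l ≤ mmax u := by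
    have := Finset.card_le_card hsub
    simpa [hcard, Nat.card_Icc] using this
  have hle : mmax u - l ≤ k :=
    Nat.lt_succ_iff.mp (Nat.choose_eq_zero_iff.mp (hz u hu))
  by_cases hm : mmax u = k + l
  · have : mmax u - l = k := by omega
    simp [hm, this]
  · have : mmax u - l < k := by omega
    simp [hm, Nat.choose_eq_zero_of_lt this]
end
end

section
/- Let I be a squarefree stable ideal of S = K[x_1,…,x_n]. If β_{k,k+ℓ}(I) is an extremal Betti number of I, then 1 ≤ β_{k,k+ℓ}(I) ≤ C(k+ℓ−1, ℓ−1), where C(·,·) denotes the binomial coefficient. -/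
open Finset

noncomputable section

/-- if `β_{k,k+ℓ}(I)` is an extremal Betti number of a squarefree stable
ideal `I`, then `1 ≤ β_{k,k+ℓ}(I) ≤ C(k+ℓ-1, ℓ-1)`. -/
theorem betti_bounds_of_extremal (n k l : ℕ) (I : Finset (Finset ℕ))
    (hI : IsSqStable n I) (h : IsExtremal I k l) :
    1 ≤ betti I k l ∧ betti I k l ≤ (k + l - 1).choose (l - 1) := by
  obtain ⟨hne, hvan⟩ := h
  refine ⟨Nat.one_le_iff_ne_zero.mpr hne, ?_⟩
  have hcard : ∀ u ∈ gensDeg I l, u.card = l := fun u hu => (Finset.mem_filter.mp hu).2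
  have hsub : ∀ u ∈ gensDeg I l, u ⊆ Finset.Icc 1 n := by
    intro u hu
    exact hI.1.1 u (Finset.mem_filter.mp (Finset.mem_filter.mp hu).1).1
  rcases Nat.eq_zero_or_pos l with hl | hl
  · subst hl
    have hsub0 : gensDeg I 0 ⊆ {∅} := by
      intro u hu
      simp [Finset.card_eq_zero.mp (hcard u hu)]
    have h1 : betti I k 0 ≤ ∑ u ∈ ({∅} : Finset (Finset ℕ)), (mmax u - 0).choose k :=
      Finset.sum_le_sum_of_subset hsub0
    simp only [Finset.sum_singleton, mmax, Finset.sup_empty] at h1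
    calc betti I k 0 ≤ (Nat.choose 0 k) := by simpa using h1
      _ ≤ 1 := by rcases k with _ | k <;> simp
      _ = (k + 0 - 1).choose (0 - 1) := by simp
  -- main case l ≥ 1
  have h0 : betti I (k + 1) l = 0 := hvan (k + 1) l (Nat.le_succ k) le_rfl (by simp)
  have hbd : ∀ u ∈ gensDeg I l, mmax u - l ≤ k := by
    intro u hu
    have := (Finset.sum_eq_zero_iff).mp h0 u hu
    have := Nat.choose_eq_zero_iff.mp this
    omega
  have hsubIcc : ∀ u ∈ gensDeg I l, u ⊆ Finset.Icc 1 (mmax u) := by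
    intro u hu a ha
    refine Finset.mem_Icc.mpr ⟨(Finset.mem_Icc.mp (hsub u hu ha)).1, ?_⟩
    exact Finset.le_sup (f := id) ha
  have hge : ∀ u ∈ gensDeg I l, l ≤ mmax u := by
    intro u hu
    have := Finset.card_le_card (hsubIcc u hu)
    rw [hcard u hu, Nat.card_Icc] at this
    omega
  have hmem : ∀ u ∈ gensDeg I l, mmax u ∈ u := by
    intro u hu
    have hune : u.Nonempty := by
      rw [← Finset.card_pos, hcard u hu]; exact hl
    obtain ⟨b, hb, hbeq⟩ := Finset.exists_mem_eq_sup u hune id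
    simpa [mmax, hbeq] using hb
  -- betti equals card of filter
  set S := (gensDeg I l).filter (fun u => mmax u = k + l) with hS
  have hbetti : betti I k l = S.card := by
    rw [betti]
    rw [Finset.card_filter]
    refine Finset.sum_congr rfl ?_
    intro u hu
    by_cases hmu : mmax u = k + l
    · have : mmax u - l = k := by omega
      simp [hmu, this]
    · have h1 := hbd u hu
      have h2 := hge u hu
      have : mmax u - l < k := by omega
      simp [hmu, Nat.choose_eq_zero_iff.mpr this]
  rw [hbetti]
  -- injection into (l-1)-subsets of Icc 1 (k+l-1)
  have hmap : ∀ u ∈ S, u.erase (k + l) ∈ (Finset.Icc 1 (k + l - 1)).powersetCard (l - 1) := by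
    intro u hu
    obtain ⟨hu1, hu2⟩ := Finset.mem_filter.mp hu
    refine Finset.mem_powersetCard.mpr ⟨?_, ?_⟩
    · intro a ha
      obtain ⟨hane, hau⟩ := Finset.mem_erase.mp ha
      have h1 := Finset.mem_Icc.mp (hsubIcc u hu1 hau)
      rw [hu2] at h1
      refine Finset.mem_Icc.mpr ⟨h1.1, by omega⟩
    · rw [Finset.card_erase_of_mem (hu2 ▸ hmem u hu1), hcard u hu1]
  have hinj : Set.InjOn (fun u : Finset ℕ => u.erase (k + l)) (↑S : Set (Finset ℕ)) := by
    intro u hu v hv heq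
    obtain ⟨hu1, hu2⟩ := Finset.mem_filter.mp hu
    obtain ⟨hv1, hv2⟩ := Finset.mem_filter.mp hv
    have hku : k + l ∈ u := hu2 ▸ hmem u hu1
    have hkv : k + l ∈ v := hv2 ▸ hmem v hv1
    have : insert (k + l) (u.erase (k + l)) = insert (k + l) (v.erase (k + l)) := by
      simpa using congrArg (insert (k + l)) heq
    rwa [Finset.insert_erase hku, Finset.insert_erase hkv] at this
  calc S.card ≤ ((Finset.Icc 1 (k + l - 1)).powersetCard (l - 1)).card :=
        Finset.card_le_card_of_injOn _ hmap hinj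
    _ = (k + l - 1).choose (l - 1) := by
        rw [Finset.card_powersetCard, Nat.card_Icc]
        simp
end
end

section
/- Let n ≥ 2 and let I be a squarefree strongly stable ideal of S = K[x_1,…,x_n] such that (k,1) is a corner of I for some positive integer k (so k+1 ≤ n). Then (k,1) is the only corner of I, i.e. C(I) = {(k,1)}, and I = (x_1, x_2, …, x_{k+1}). -/
open Finset

noncomputable section

/-- Every element of a squarefree monomial ideal contains a minimal generator. -/
lemma exists_gen_subset (I : Finset (Finset ℕ)) {v : Finset ℕ} (hv : v ∈ I) :
    ∃ u ∈ gens I, u ⊆ v := by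
  obtain ⟨w, hw, hmin⟩ := Finset.exists_min_image (I.filter (· ⊆ v)) Finset.card
    ⟨v, Finset.mem_filter.mpr ⟨hv, le_refl v⟩⟩
  rw [Finset.mem_filter] at hw
  refine ⟨w, Finset.mem_filter.mpr ⟨hw.1, ?_⟩, hw.2⟩
  intro u hu huw
  exact Finset.eq_of_subset_of_card_le huw
    (hmin u (Finset.mem_filter.mpr ⟨hu, huw.trans hw.2⟩))

/-- if `n ≥ 2` and a squarefree strongly stable ideal `I` of `K[x_1,…,x_n]`
has a corner `(k,1)`, then `C(I) = {(k,1)}` and `I = (x_1,…,x_{k+1})`. -/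
theorem corner_deg_one (n k : ℕ) (hn : 2 ≤ n) (hk : 1 ≤ k)
    (I : Finset (Finset ℕ)) (hI : IsSqStronglyStable n I)
    (hc : (k, 1) ∈ corners I) :
    corners I = {(k, 1)} ∧
      I = (Finset.Icc 1 n).powerset.filter fun v => ∃ i ∈ v, i ≤ k + 1 := by
  have hE : IsExtremal I k 1 := hc
  -- a degree-1 generator {a} with k ≤ a - 1
  have hb1 : betti I k 1 ≠ 0 := hE.1
  unfold betti at hb1
  obtain ⟨u, hu, hcu⟩ := Finset.exists_ne_zero_of_sum_ne_zero hb1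
  obtain ⟨hug, huc⟩ := Finset.mem_filter.mp hu
  obtain ⟨a, rfl⟩ := Finset.card_eq_one.mp huc
  have hma : mmax {a} = a := by simp [mmax]
  rw [hma] at hcu
  have hak : k ≤ a - 1 := Nat.le_of_not_lt fun h => hcu (Nat.choose_eq_zero_of_lt h)
  have ha1 : 1 ≤ a := (Finset.mem_Icc.mp
    (hI.1.1 _ ((Finset.mem_filter.mp hug).1) (Finset.mem_singleton_self a))).1
  -- every degree-1 generator has mmax ≤ k+1
  have h2 : ∀ w ∈ gensDeg I 1, mmax w ≤ k + 1 := by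
    intro w hw
    have hz : betti I (k + 1) 1 = 0 := hE.2 (k + 1) 1 (by omega) le_rfl
      (by simp only [ne_eq, Prod.mk.injEq, not_and]; intro hh; omega)
    unfold betti at hz
    have := Finset.sum_eq_zero_iff.mp hz w hw
    have := Nat.choose_eq_zero_iff.mp this
    omega
  have hak1 : a = k + 1 := by
    have := h2 {a} hu
    rw [hma] at this
    omega
  subst hak1
  -- all singletons {j}, 1 ≤ j ≤ k+1, belong to I
  have huI : ({k + 1} : Finset ℕ) ∈ I := (Finset.mem_filter.mp hug).1
  have hsing : ∀ j, 1 ≤ j → j ≤ k + 1 → ({j} : Finset ℕ) ∈ I := by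
    intro j hj1 hjk
    rcases eq_or_lt_of_le hjk with h | h
    · rwa [h]
    · have := hI.2 _ hug (k + 1) (Finset.mem_singleton_self _) j hj1 h
        (by simp; omega)
      simpa using this
  have hempty : (∅ : Finset ℕ) ∉ I := by
    intro h
    exact Finset.singleton_ne_empty _
      ((Finset.mem_filter.mp hug).2 ∅ h (Finset.empty_subset _)).symm
  -- every minimal generator is a singleton {b} with 1 ≤ b ≤ k+1
  have hgen1 : ∀ w ∈ gens I, ∃ b, w = {b} ∧ 1 ≤ b ∧ b ≤ k + 1 := by
    intro w hw
    have hwI : w ∈ I := (Finset.mem_filter.mp hw).1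
    have hwsub : w ⊆ Finset.Icc 1 n := hI.1.1 w hwI
    by_cases h1 : w.card = 1
    · obtain ⟨b, rfl⟩ := Finset.card_eq_one.mp h1
      have hb := h2 {b} (Finset.mem_filter.mpr ⟨hw, h1⟩)
      rw [show mmax {b} = b by simp [mmax]] at hb
      exact ⟨b, rfl, (Finset.mem_Icc.mp (hwsub (Finset.mem_singleton_self b))).1, hb⟩
    · exfalso
      by_cases h0 : w.card = 0
      · exact hempty (by rwa [Finset.card_eq_zero.mp h0] at hwI)
      · have hl2 : 2 ≤ w.card := by omega
        have hzz : betti I k w.card = 0 := hE.2 k w.card le_rfl (by omega)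
          (by simp only [ne_eq, Prod.mk.injEq, not_and]; intro _; omega)
        unfold betti at hzz
        have hterm := Finset.sum_eq_zero_iff.mp hzz w
          (Finset.mem_filter.mpr ⟨hw, rfl⟩)
        have hM : mmax w - w.card < k := Nat.choose_eq_zero_iff.mp hterm
        have hne : w.Nonempty := Finset.card_pos.mp (by omega)
        have hmw : w.min' hne ∈ w := w.min'_mem hne
        have hsub2 : w ⊆ Finset.Icc (w.min' hne) (mmax w) := by
          intro x hx
          exact Finset.mem_Icc.mpr ⟨w.min'_le x hx, Finset.le_sup (f := id) hx⟩
        have hcard := Finset.card_le_card hsub2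
        rw [Nat.card_Icc] at hcard
        have hm1 : 1 ≤ w.min' hne := (Finset.mem_Icc.mp (hwsub hmw)).1
        have hmk : w.min' hne ≤ k := by omega
        have heq : ({w.min' hne} : Finset ℕ) = w :=
          (Finset.mem_filter.mp hw).2 _ (hsing _ hm1 (by omega))
            (Finset.singleton_subset_iff.mpr hmw)
        exact h1 (by rw [← heq]; simp)
  constructor
  · -- corners I = {(k, 1)}
    ext ⟨i, j⟩
    simp only [corners, Set.mem_setOf_eq, Set.mem_singleton_iff, Prod.mk.injEq]
    constructor
    · rintro ⟨hbij, hext⟩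
      unfold betti at hbij
      obtain ⟨w, hwd, hwne⟩ := Finset.exists_ne_zero_of_sum_ne_zero hbij
      have hwg : w ∈ gens I := (Finset.mem_filter.mp hwd).1
      have hwc : w.card = j := (Finset.mem_filter.mp hwd).2
      obtain ⟨b, rfl, hb1, hbk1⟩ := hgen1 w hwg
      rw [Finset.card_singleton] at hwc
      subst hwc
      rw [show mmax {b} = b by simp [mmax]] at hwne
      have hib : ¬ (b - 1 < i) := fun h => hwne (Nat.choose_eq_zero_of_lt h)
      have hik : i ≤ k := by omega
      rcases eq_or_lt_of_le hik with h | h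
      · exact ⟨h, rfl⟩
      · exact absurd (hext k 1 (le_of_lt h) le_rfl
          (by simp only [ne_eq, Prod.mk.injEq, not_and]; intro hh; omega)) hE.1
    · rintro ⟨rfl, rfl⟩; exact hc
  · -- I = (x_1, …, x_{k+1})
    ext v
    simp only [Finset.mem_filter, Finset.mem_powerset]
    constructor
    · intro hv
      obtain ⟨u', hu', hu'v⟩ := exists_gen_subset I hv
      obtain ⟨b, rfl, hb1, hbk1⟩ := hgen1 u' hu'
      exact ⟨hI.1.1 v hv, b, hu'v (Finset.mem_singleton_self b), hbk1⟩
    · rintro ⟨hvsub, i, hiv, hik⟩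
      have hi1 : 1 ≤ i := (Finset.mem_Icc.mp (hvsub hiv)).1
      exact hI.1.2 {i} (hsing i hi1 hik) v (Finset.singleton_subset_iff.mpr hiv) hvsub
end
end

section
/- Every nonzero proper squarefree strongly stable ideal I of S = K[x_1,x_2,x_3] has at most one corner, i.e. |C(I)| ≤ 1. -/
open Finset

noncomputable section

lemma mem_of_mem_gens {I : Finset (Finset ℕ)} {u} (h : u ∈ gens I) : u ∈ I :=
  (Finset.mem_filter.mp h).1

lemma mmax_le3 {u : Finset ℕ} (h : u ⊆ Finset.Icc 1 3) : mmax u ≤ 3 := by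
  apply Finset.sup_le
  intro a ha
  exact (Finset.mem_Icc.mp (h ha)).2

lemma betti_zero_of_big_l {I : Finset (Finset ℕ)}
    (hI : ∀ u ∈ I, u ⊆ Finset.Icc 1 3) {k l : ℕ} (hl : 4 ≤ l) : betti I k l = 0 := by
  apply Finset.sum_eq_zero
  intro u hu
  exfalso
  obtain ⟨hg, hc⟩ := Finset.mem_filter.mp hu
  have h1 : u ⊆ Finset.Icc 1 3 := hI u (mem_of_mem_gens hg)
  have h2 := Finset.card_le_card h1
  rw [Nat.card_Icc] at h2
  omega

lemma betti_zero_of_big_k {I : Finset (Finset ℕ)}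
    (hI : ∀ u ∈ I, u ⊆ Finset.Icc 1 3) (h0 : ∅ ∉ I) {k l : ℕ} (hk : 3 ≤ k) :
    betti I k l = 0 := by
  apply Finset.sum_eq_zero
  intro u hu
  obtain ⟨hg, hc⟩ := Finset.mem_filter.mp hu
  have hu' := mem_of_mem_gens hg
  have h1 := mmax_le3 (hI u hu')
  have h2 : 1 ≤ u.card := by
    rcases Finset.eq_empty_or_nonempty u with rfl | h
    · exact absurd hu' h0
    · exact Finset.card_pos.mpr h
  exact Nat.choose_eq_zero_of_lt (by omega)

/-- Bounded (decidable) form of extremality. -/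
def Ext' (I : Finset (Finset ℕ)) (k l : ℕ) : Prop :=
  betti I k l ≠ 0 ∧ ∀ i ∈ Finset.range 3, ∀ j ∈ Finset.range 4,
    k ≤ i → l ≤ j → (i, j) ≠ (k, l) → betti I i j = 0

instance (I : Finset (Finset ℕ)) (k l : ℕ) : Decidable (Ext' I k l) := by
  unfold Ext'; infer_instance

/-- Bounded (decidable) form of squarefree strong stability in 3 variables. -/
def SSS (J : Finset (Finset ℕ)) : Prop :=
  (∀ u ∈ J, u ⊆ Finset.Icc 1 3) ∧
  (∀ u ∈ J, ∀ v ∈ (Finset.Icc 1 3).powerset, u ⊆ v → v ∈ J) ∧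
  (∀ u ∈ gens J, ∀ i ∈ u, ∀ j ∈ Finset.Icc 1 3, j < i → j ∉ u →
    insert j (u.erase i) ∈ J)

instance (J : Finset (Finset ℕ)) : Decidable (SSS J) := by
  unfold SSS; infer_instance

set_option maxRecDepth 100000 in
lemma key : ∀ J ∈ ((Finset.Icc 1 3).powerset).powerset, SSS J → ∅ ∉ J →
    ∀ k1 ∈ Finset.range 3, ∀ l1 ∈ Finset.range 4, ∀ k2 ∈ Finset.range 3,
    ∀ l2 ∈ Finset.range 4, Ext' J k1 l1 → Ext' J k2 l2 → (k1, l1) = (k2, l2) := by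
  decide

/-- every nonzero proper squarefree strongly stable ideal of
`K[x_1,x_2,x_3]` has at most one corner. -/
theorem corners_subsingleton_of_three_vars (I : Finset (Finset ℕ))
    (hI : IsSqStronglyStable 3 I) (hne : I.Nonempty) (hproper : ∅ ∉ I) :
    (corners I).Subsingleton := by
  intro p hp q hq
  have hsub := hI.1.1
  have hJ : I ∈ ((Finset.Icc 1 3).powerset).powerset := by
    rw [Finset.mem_powerset]
    intro u hu
    exact Finset.mem_powerset.mpr (hsub u hu)
  have hS : SSS I :=
    ⟨hsub, fun u hu v hv huv => hI.1.2 u hu v huv (Finset.mem_powerset.mp hv),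
      fun u hu i hiu j hj hji hju =>
        hI.2 u hu i hiu j (Finset.mem_Icc.mp hj).1 hji hju⟩
  have hp' : IsExtremal I p.1 p.2 := hp
  have hq' : IsExtremal I q.1 q.2 := hq
  have bp1 : p.1 < 3 := by
    by_contra h
    exact hp'.1 (betti_zero_of_big_k hsub hproper (by omega))
  have bp2 : p.2 < 4 := by
    by_contra h
    exact hp'.1 (betti_zero_of_big_l hsub (by omega))
  have bq1 : q.1 < 3 := by
    by_contra h
    exact hq'.1 (betti_zero_of_big_k hsub hproper (by omega))
  have bq2 : q.2 < 4 := by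
    by_contra h
    exact hq'.1 (betti_zero_of_big_l hsub (by omega))
  have := key I hJ hS hproper p.1 (Finset.mem_range.mpr bp1) p.2 (Finset.mem_range.mpr bp2)
    q.1 (Finset.mem_range.mpr bq1) q.2 (Finset.mem_range.mpr bq2)
      ⟨hp'.1, fun i _ j _ h1 h2 h3 => hp'.2 i j h1 h2 h3⟩
      ⟨hq'.1, fun i _ j _ h1 h2 h3 => hq'.2 i j h1 h2 h3⟩
  exact Prod.ext (congrArg Prod.fst this) (congrArg Prod.snd this)
end
end

section
/- Let u = x_{i_1}···x_{i_q} be a squarefree monomial of S = K[x_1,…,x_n] of degree q < n−1. If u has a gap of width ≥ 2, or u has at least two gaps, then there exist squarefree monomials v, w of S of degree q+1 with v >_slex w and m(v) = m(w) = n, such that u divides v and u does not divide w. -/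
open Finset

noncomputable section

lemma mmax_mem_of_nonempty {u : Finset ℕ} (h : u.Nonempty) : mmax u ∈ u := by
  obtain ⟨b, hb, he⟩ := Finset.exists_mem_eq_sup u h id
  rw [mmax, he]; exact hb

lemma mmax_le_of_subset {n : ℕ} {u : Finset ℕ} (h : u ⊆ Finset.Icc 1 n) : mmax u ≤ n :=
  Finset.sup_le fun x hx => (Finset.mem_Icc.mp (h hx)).2

/-- main construction: `v = insert g u`, `w = insert b (v.erase a)`. -/
lemma construction (n : ℕ) (u : Finset ℕ) (hu : u ⊆ Finset.Icc 1 n)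
    (g a b : ℕ) (hg : g ∈ Finset.Icc 1 n) (hgu : g ∉ u)
    (ha : a ∈ u) (hb : b ∈ Finset.Icc 1 n) (hbu : b ∉ u) (hbg : b ≠ g)
    (hab : a < b) (hn : n = g ∨ n ∈ u) :
    ∃ v w : Finset ℕ, v ⊆ Finset.Icc 1 n ∧ w ⊆ Finset.Icc 1 n ∧
      v.card = u.card + 1 ∧ w.card = u.card + 1 ∧ slexGT v w ∧
      mmax v = n ∧ mmax w = n ∧ u ⊆ v ∧ ¬ u ⊆ w := by
  set v : Finset ℕ := insert g u with hv
  set w : Finset ℕ := insert b (v.erase a) with hw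
  have hav : a ∈ v := Finset.mem_insert_of_mem ha
  have hbv : b ∉ v := by
    simp only [hv, Finset.mem_insert]
    push_neg; exact ⟨hbg, hbu⟩
  have hab' : a ≠ b := Nat.ne_of_lt hab
  have hvsub : v ⊆ Finset.Icc 1 n := Finset.insert_subset hg hu
  have hwsub : w ⊆ Finset.Icc 1 n :=
    Finset.insert_subset hb ((Finset.erase_subset _ _).trans hvsub)
  have hbn : b ≤ n := (Finset.mem_Icc.mp hb).2
  have hnv : n ∈ v := by
    rcases hn with h | h
    · exact h ▸ Finset.mem_insert_self g u
    · exact Finset.mem_insert_of_mem h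
  have hnw : n ∈ w := by
    apply Finset.mem_insert_of_mem
    exact Finset.mem_erase.mpr ⟨by omega, hnv⟩
  have haw : a ∉ w := by
    simp only [hw, Finset.mem_insert, Finset.mem_erase]
    push_neg
    exact ⟨hab', fun hc => absurd rfl hc⟩
  have hsd : {x : ℕ | x ∈ symmDiff v w} = ({a, b} : Set ℕ) := by
    ext x
    simp only [Set.mem_setOf_eq, Finset.mem_symmDiff, Set.mem_insert_iff,
      Set.mem_singleton_iff]
    constructor
    · rintro (⟨hxv, hxw⟩ | ⟨hxw, hxv⟩)
      · left
        by_contra hxa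
        exact hxw (Finset.mem_insert_of_mem (Finset.mem_erase.mpr ⟨hxa, hxv⟩))
      · rcases Finset.mem_insert.mp hxw with h | h
        · right; exact h
        · exact absurd (Finset.mem_of_mem_erase h) hxv
    · rintro (rfl | rfl)
      · exact Or.inl ⟨hav, haw⟩
      · exact Or.inr ⟨Finset.mem_insert_self _ _, hbv⟩
  refine ⟨v, w, hvsub, hwsub, ?_, ?_, ?_, ?_, ?_, Finset.subset_insert g u, ?_⟩
  · rw [hv, Finset.card_insert_of_notMem hgu]
  · rw [hw, Finset.card_insert_of_notMem (fun hc => hbv (Finset.mem_of_mem_erase hc)),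
      Finset.card_erase_of_mem hav, hv, Finset.card_insert_of_notMem hgu]
    omega
  · refine ⟨?_, ?_⟩
    · intro he; rw [he] at hav; exact haw hav
    · rw [hsd, csInf_pair]
      have : a ⊓ b = a := inf_eq_left.mpr hab.le
      rw [this]; exact hav
  · exact le_antisymm (mmax_le_of_subset hvsub) (Finset.le_sup (f := id) hnv)
  · exact le_antisymm (mmax_le_of_subset hwsub) (Finset.le_sup (f := id) hnw)
  · intro hc; exact haw (hc ha)

/-- if a squarefree monomial `u` of degree `q < n-1` of `K[x_1,…,x_n]`
has a gap of width at least `2`, or at least two gaps, then there are squarefree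
monomials `v >_slex w` of degree `q+1` with `m(v) = m(w) = n` such that `u ∣ v`
and `u ∤ w`. -/
theorem exists_multiple_nonmultiple (n q : ℕ) (u : Finset ℕ)
    (hu : u ⊆ Finset.Icc 1 n) (hq : u.card = q) (hqn : q < n - 1)
    (h : (∃ a ∈ gapSet u, 2 ≤ gapWidth u a) ∨ 2 ≤ (gapSet u).card) :
    ∃ v w : Finset ℕ, v ⊆ Finset.Icc 1 n ∧ w ⊆ Finset.Icc 1 n ∧
      v.card = q + 1 ∧ w.card = q + 1 ∧ slexGT v w ∧
      mmax v = n ∧ mmax w = n ∧ u ⊆ v ∧ ¬ u ⊆ w := by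
  subst hq
  -- there is at least one gap in every case
  have hgap : ∃ a, a ∈ gapSet u := by
    rcases h with ⟨a, ha, _⟩ | h2
    · exact ⟨a, ha⟩
    · exact Finset.card_pos.mp (by omega)
  obtain ⟨a0, ha0⟩ := hgap
  have ha0' := Finset.mem_filter.mp ha0
  have ha0u : a0 ∈ u := ha0'.1
  have hune : u.Nonempty := ⟨a0, ha0u⟩
  have hmm : mmax u ∈ u := mmax_mem_of_nonempty hune
  have hmn : mmax u ≤ n := mmax_le_of_subset hu
  -- facts about gap elements
  have gapfact : ∀ c ∈ gapSet u, c ∈ u ∧ c + 1 ∉ u ∧ c + 1 < mmax u ∧ 1 ≤ c := by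
    intro c hc
    obtain ⟨hcu, hclt, hcs⟩ := Finset.mem_filter.mp hc
    have h1 : c + 1 ≠ mmax u := fun he => hcs (he ▸ hmm)
    exact ⟨hcu, hcs, by omega, (Finset.mem_Icc.mp (hu hcu)).1⟩
  by_cases hnu : n ∈ u
  · -- n ∈ u : use the two missing interior indices provided by the hypothesis
    rcases h with ⟨a, ha, hwid⟩ | h2
    · -- a gap of width ≥ 2 after a : both a+1 and a+2 are missing
      obtain ⟨hau, ha1, -, -⟩ := gapfact a ha
      have halt : a < mmax u := (Finset.mem_filter.mp ha).2.1
      set S : Set ℕ := {b : ℕ | b ∈ u ∧ a < b} with hS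
      have hSne : S.Nonempty := ⟨mmax u, hmm, halt⟩
      have hsmem : sInf S ∈ S := Nat.sInf_mem hSne
      have hwid' : 2 ≤ sInf S - a - 1 := hwid
      have hs3 : a + 3 ≤ sInf S := by
        have : a < sInf S := hsmem.2
        omega
      have ha2 : a + 2 ∉ u := fun hc => by
        have : sInf S ≤ a + 2 := Nat.sInf_le ⟨hc, by omega⟩
        omega
      have ha1' : a + 1 ∉ u := fun hc => by
        have : sInf S ≤ a + 1 := Nat.sInf_le ⟨hc, by omega⟩
        omega
      have hsn : sInf S ≤ n := (Finset.mem_Icc.mp (hu hsmem.1)).2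
      have ha1n : a + 1 ∈ Finset.Icc 1 n := Finset.mem_Icc.mpr ⟨by omega, by omega⟩
      have ha2n : a + 2 ∈ Finset.Icc 1 n := Finset.mem_Icc.mpr ⟨by omega, by omega⟩
      obtain ⟨v, w, h1, h2, h3, h4, h5, h6, h7, h8, h9⟩ :=
        construction n u hu (a + 1) a (a + 2) ha1n ha1' hau ha2n ha2 (by omega)
          (by omega) (Or.inr hnu)
      exact ⟨v, w, h1, h2, h3, h4, h5, h6, h7, h8, h9⟩
    · -- two distinct gaps a1 < a2 : use a1+1 and a2+1
      obtain ⟨a1, ha1, a2, ha2, hne⟩ := Finset.one_lt_card.mp (by omega : 1 < (gapSet u).card)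
      -- wlog a1 < a2
      obtain ⟨c1, c2, hc1, hc2, hlt⟩ : ∃ c1 c2, c1 ∈ gapSet u ∧ c2 ∈ gapSet u ∧ c1 < c2 := by
        rcases Nat.lt_or_ge a1 a2 with hl | hl
        · exact ⟨a1, a2, ha1, ha2, hl⟩
        · exact ⟨a2, a1, ha2, ha1, by omega⟩
      obtain ⟨hc1u, hc1m, hc1lt, hc11⟩ := gapfact c1 hc1
      obtain ⟨hc2u, hc2m, hc2lt, hc21⟩ := gapfact c2 hc2
      have hc1n : c1 + 1 ∈ Finset.Icc 1 n := Finset.mem_Icc.mpr ⟨by omega, by omega⟩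
      have hc2n : c2 + 1 ∈ Finset.Icc 1 n := Finset.mem_Icc.mpr ⟨by omega, by omega⟩
      obtain ⟨v, w, h1, h2, h3, h4, h5, h6, h7, h8, h9⟩ :=
        construction n u hu (c1 + 1) c2 (c2 + 1) hc1n hc1m hc2u hc2n hc2m (by omega)
          (by omega) (Or.inr hnu)
      exact ⟨v, w, h1, h2, h3, h4, h5, h6, h7, h8, h9⟩
  · -- n ∉ u : take g = n and use one gap
    obtain ⟨ha0u', ha0m, ha0lt, ha01⟩ := gapfact a0 ha0
    have hn1 : 1 ≤ n := by omega
    have hgn : n ∈ Finset.Icc 1 n := Finset.mem_Icc.mpr ⟨hn1, le_refl n⟩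
    have ha0n : a0 + 1 ∈ Finset.Icc 1 n := Finset.mem_Icc.mpr ⟨by omega, by omega⟩
    obtain ⟨v, w, h1, h2, h3, h4, h5, h6, h7, h8, h9⟩ :=
      construction n u hu n a0 (a0 + 1) hgn hnu ha0u' ha0n ha0m (by omega)
        (by omega) (Or.inl rfl)
    exact ⟨v, w, h1, h2, h3, h4, h5, h6, h7, h8, h9⟩
end
end

section
/- Let I be a squarefree strongly stable ideal of S = K[x_1,x_2,x_3,x_4] of initial degree 2 having a corner in degree 2 (i.e. (k,2) ∈ C(I) for some positive integer k). Then I has at most 2 corners, i.e. |C(I)| ≤ 2. -/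
open Finset

noncomputable section

/-- a squarefree strongly stable ideal of `K[x_1,…,x_4]` of initial degree
`2` with a corner in degree `2` has at most `2` corners. -/
theorem corners_le_two_of_four_vars (I : Finset (Finset ℕ))
    (hI : IsSqStronglyStable 4 I)
    (hindeg : ∀ u ∈ I, 2 ≤ u.card) (hindeg' : ∃ u ∈ I, u.card = 2)
    (hcor : ∃ k : ℕ, 1 ≤ k ∧ (k, 2) ∈ corners I) :
    (corners I).Finite ∧ (corners I).ncard ≤ 2 := by
  obtain ⟨⟨hsub, hup⟩, _⟩ := hI
  obtain ⟨w, hwI, hw2⟩ := hindeg'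
  -- the degree of any corner is 2 or 3
  have hdeg : ∀ p ∈ corners I, p.2 = 2 ∨ p.2 = 3 := by
    rintro ⟨k, l⟩ hp
    obtain ⟨hne, _⟩ := hp
    have hnon : gensDeg I l ≠ ∅ := by
      intro h
      exact hne (by simp [betti, h])
    obtain ⟨u, hu⟩ := Finset.nonempty_iff_ne_empty.2 hnon
    simp only [gensDeg, gens, Finset.mem_filter] at hu
    obtain ⟨⟨huI, humin⟩, hcard⟩ := hu
    have h2 : 2 ≤ l := hcard ▸ hindeg u huI
    have h4 : l ≤ 4 := by
      have := Finset.card_le_card (hsub u huI)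
      rw [hcard] at this
      simpa [Nat.card_Icc] using this
    have hne4 : l ≠ 4 := by
      intro h4'
      have hu4 : u = Finset.Icc 1 4 := by
        apply Finset.eq_of_subset_of_card_le (hsub u huI)
        simp [hcard, h4', Nat.card_Icc]
      have hw : w = u := humin w hwI (by rw [hu4]; exact hsub w hwI)
      rw [hw, hcard, h4'] at hw2
      omega
    simp only
    omega
  -- two corners cannot share a degree
  have hinj : Set.InjOn Prod.snd (corners I) := by
    rintro ⟨k, l⟩ hk ⟨k', l'⟩ hk' h
    simp only at h
    subst h
    obtain ⟨hne, hext⟩ := hk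
    obtain ⟨hne', hext'⟩ := hk'
    rcases lt_trichotomy k k' with h | h | h
    · exact absurd (hext k' l (le_of_lt h) le_rfl (by simp; omega)) hne'
    · simp [h]
    · exact absurd (hext' k l (le_of_lt h) le_rfl (by simp; omega)) hne
  have himg : Prod.snd '' corners I ⊆ ({2, 3} : Set ℕ) := by
    rintro _ ⟨p, hp, rfl⟩
    rcases hdeg p hp with h | h <;> simp [h]
  have hfin23 : ({2, 3} : Set ℕ).Finite := Set.toFinite _
  have hfin : (Prod.snd '' corners I).Finite := hfin23.subset himg
  have hfinc : (corners I).Finite := Set.Finite.of_finite_image hfin hinj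
  refine ⟨hfinc, ?_⟩
  calc (corners I).ncard = (Prod.snd '' corners I).ncard :=
        (Set.ncard_image_of_injOn hinj).symm
    _ ≤ ({2, 3} : Set ℕ).ncard := Set.ncard_le_ncard himg hfin23
    _ ≤ 2 := by
        rw [Set.ncard_insert_of_notMem (by simp), Set.ncard_singleton]
end
end

section
/- Let n ≥ 5 and let I be a squarefree strongly stable ideal of S = K[x_1,…,x_n] of initial degree 2 having a corner in degree 2 (i.e. (k,2) ∈ C(I) for some positive integer k). Then I has at most n−3 corners, i.e. |C(I)| ≤ n−3. -/
open Finset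

noncomputable section

section AuxCorners

variable {n : ℕ} {I : Finset (Finset ℕ)}

lemma gens_subset' : gens I ⊆ I := Finset.filter_subset _ _

lemma mem_gens_iff' {u : Finset ℕ} :
    u ∈ gens I ↔ u ∈ I ∧ ∀ v ∈ I, v ⊆ u → v = u := by
  simp [gens]

lemma mem_gensDeg_iff' {u : Finset ℕ} {l : ℕ} :
    u ∈ gensDeg I l ↔ u ∈ gens I ∧ u.card = l := by
  simp [gensDeg]

lemma le_mmax' {u : Finset ℕ} {a : ℕ} (h : a ∈ u) : a ≤ mmax u :=
  Finset.le_sup (f := id) h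

lemma mmax_le' {u : Finset ℕ} {m : ℕ} (h : ∀ a ∈ u, a ≤ m) : mmax u ≤ m :=
  Finset.sup_le h

lemma card_le_mmax' {u : Finset ℕ} (h0 : u ⊆ Finset.Icc 1 n) : u.card ≤ mmax u := by
  have hsub : u ⊆ Finset.Icc 1 (mmax u) := by
    intro a ha
    have h1 := (Finset.mem_Icc.1 (h0 ha)).1
    exact Finset.mem_Icc.2 ⟨h1, le_mmax' ha⟩
  calc u.card ≤ (Finset.Icc 1 (mmax u)).card := Finset.card_le_card hsub
    _ = mmax u := by simp

lemma exists_gen_of_betti_ne {k l : ℕ} (h : betti I k l ≠ 0) :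
    ∃ u ∈ gens I, u.card = l ∧ k ≤ mmax u - l := by
  obtain ⟨u, hu, hne⟩ := Finset.exists_ne_zero_of_sum_ne_zero h
  rw [mem_gensDeg_iff'] at hu
  refine ⟨u, hu.1, hu.2, ?_⟩
  by_contra hlt
  exact hne (Nat.choose_eq_zero_iff.2 (by omega))

lemma mmax_lt_of_betti_eq {k l : ℕ} (h : betti I k l = 0) {u : Finset ℕ}
    (hu : u ∈ gens I) (hc : u.card = l) : mmax u - l < k := by
  rw [betti, Finset.sum_eq_zero_iff] at h
  exact Nat.choose_eq_zero_iff.1 (h u (mem_gensDeg_iff'.2 ⟨hu, hc⟩))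

lemma corners_antichain {p q : ℕ × ℕ} (hp : p ∈ corners I) (hq : q ∈ corners I)
    (h1 : p.1 ≤ q.1) (h2 : p.2 ≤ q.2) : p = q := by
  by_contra hne
  exact hq.1 (hp.2 q.1 q.2 h1 h2 (by simpa using Ne.symm hne))

lemma mem_gens_of_card_two (hindeg : ∀ u ∈ I, 2 ≤ u.card)
    {u : Finset ℕ} (hu : u ∈ I) (hc : u.card = 2) : u ∈ gens I :=
  mem_gens_iff'.2 ⟨hu, fun v hv hsub =>
    Finset.eq_of_subset_of_card_le hsub (by rw [hc]; exact hindeg v hv)⟩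

lemma pair_swap_mem (hI : IsSqStronglyStable n I) (hindeg : ∀ u ∈ I, 2 ≤ u.card)
    {a b j : ℕ} (h : ({a, b} : Finset ℕ) ∈ I) (hab : a ≠ b) (hj : 1 ≤ j)
    (hja : j < a) (hjb : j ≠ b) : ({j, b} : Finset ℕ) ∈ I := by
  have hgen := mem_gens_of_card_two hindeg h (Finset.card_pair hab)
  have hmove := hI.2 _ hgen a (by simp) j hj hja (by
    simp only [Finset.mem_insert, Finset.mem_singleton]
    push_neg
    exact ⟨Nat.ne_of_lt hja, hjb⟩)
  have herase : ({a, b} : Finset ℕ).erase a = {b} :=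
    Finset.erase_insert (by simpa using hab)
  rwa [herase] at hmove

lemma one_pair_mem (hI : IsSqStronglyStable n I) (hindeg : ∀ u ∈ I, 2 ≤ u.card)
    {a b : ℕ} (h : ({a, b} : Finset ℕ) ∈ I) (hab : a < b) (ha : 1 ≤ a) :
    ({1, b} : Finset ℕ) ∈ I := by
  rcases eq_or_lt_of_le ha with h1 | h1
  · rwa [h1]
  · exact pair_swap_mem hI hindeg h hab.ne le_rfl h1 (by omega)

lemma pair_one_two_mem (hI : IsSqStronglyStable n I) (hindeg : ∀ u ∈ I, 2 ≤ u.card)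
    (hindeg' : ∃ u ∈ I, u.card = 2) : ({1, 2} : Finset ℕ) ∈ I := by
  obtain ⟨u, hu, hc⟩ := hindeg'
  obtain ⟨a, b, hab, rfl⟩ := Finset.card_eq_two.1 hc
  have hsub := hI.1.1 _ hu
  have ha : 1 ≤ a := (Finset.mem_Icc.1 (hsub (by simp))).1
  have hb : 1 ≤ b := (Finset.mem_Icc.1 (hsub (by simp [Finset.mem_insert]))).1
  -- wlog a < b
  have key : ∀ a b : ℕ, ({a, b} : Finset ℕ) ∈ I → a < b → ({1, 2} : Finset ℕ) ∈ I := by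
    intro a b h hlt
    have ha1 : 1 ≤ a := (Finset.mem_Icc.1 ((hI.1.1 _ h) (by simp))).1
    have h1b : ({1, b} : Finset ℕ) ∈ I := one_pair_mem hI hindeg h hlt ha1
    rcases eq_or_lt_of_le (show 2 ≤ b by omega) with h2 | h2
    · rwa [h2]
    · have := pair_swap_mem hI hindeg (a := b) (b := 1) (j := 2)
        (by rwa [Finset.pair_comm]) (by omega) (by omega) (by omega) (by omega)
      rwa [Finset.pair_comm] at this
  rcases Nat.lt_or_ge a b with hlt | hge
  · exact key a b hu hlt
  · have hlt : b < a := by omega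
    exact key b a (by rwa [Finset.pair_comm] at hu) hlt

end AuxCorners
section AuxCorners2

variable {n : ℕ} {I : Finset (Finset ℕ)}

lemma gen_eq_Icc_of_mmax_eq_card (hI : IsSqStronglyStable n I)
    {u : Finset ℕ} (hu : u ∈ gens I) (hm : mmax u ≤ u.card) :
    u = Finset.Icc 1 u.card := by
  have hsubn := hI.1.1 _ (gens_subset' hu)
  have hsub : u ⊆ Finset.Icc 1 u.card := by
    intro a ha
    exact Finset.mem_Icc.2 ⟨(Finset.mem_Icc.1 (hsubn ha)).1, le_trans (le_mmax' ha) hm⟩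
  exact Finset.eq_of_subset_of_card_le hsub (by simp)

lemma corner_shape (hI : IsSqStronglyStable n I) (hindeg : ∀ u ∈ I, 2 ≤ u.card)
    (h12 : ({1, 2} : Finset ℕ) ∈ I)
    (hcor : ∃ k : ℕ, 1 ≤ k ∧ (k, 2) ∈ corners I)
    {p : ℕ × ℕ} (hp : p ∈ corners I) : 1 ≤ p.1 ∧ 2 ≤ p.2 ∧ p.1 + p.2 ≤ n := by
  obtain ⟨u, hu, hc, hm⟩ := exists_gen_of_betti_ne hp.1
  have huI := gens_subset' hu
  have hsubn := hI.1.1 _ huI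
  have hcard2 : 2 ≤ p.2 := hc ▸ hindeg u huI
  have hclm : u.card ≤ mmax u := card_le_mmax' hsubn
  have hmn : mmax u ≤ n := mmax_le' fun a ha => (Finset.mem_Icc.1 (hsubn ha)).2
  have hp1 : 1 ≤ p.1 := by
    by_contra h0
    have h0 : p.1 = 0 := by omega
    rcases eq_or_lt_of_le hcard2 with h2 | h2
    · -- p.2 = 2 : p must equal (k,2) with k ≥ 1, contradiction
      obtain ⟨k, hk1, hkc⟩ := hcor
      have := corners_antichain hp hkc (by omega) (by omega)
      rw [this] at h0
      omega
    · -- p.2 ≥ 3 : betti 1 p.2 = 0 forces the generator to be an initial segment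
      have hb0 : betti I 1 p.2 = 0 := hp.2 1 p.2 (by omega) le_rfl (by
        intro h
        have h' : (1 : ℕ) = p.1 := congrArg Prod.fst h
        omega)
      have hlt := mmax_lt_of_betti_eq hb0 hu hc
      have hIcc : u = Finset.Icc 1 u.card :=
        gen_eq_Icc_of_mmax_eq_card hI hu (by omega)
      have h12u : ({1, 2} : Finset ℕ) ⊆ u := by
        rw [hIcc]
        intro a ha
        simp only [Finset.mem_insert, Finset.mem_singleton] at ha
        rcases ha with rfl | rfl <;> (rw [Finset.mem_Icc]; omega)
      have := (mem_gens_iff'.1 hu).2 _ h12 h12u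
      have hcd : ({1, 2} : Finset ℕ).card = 2 := Finset.card_pair (by omega)
      rw [this] at hcd
      omega
  exact ⟨hp1, hcard2, by omega⟩

lemma not_one_mem_gen (hI : IsSqStronglyStable n I)
    (hpairs : ∀ x, 2 ≤ x → x ≤ n → ({1, x} : Finset ℕ) ∈ I)
    {w : Finset ℕ} (hw : w ∈ gens I) (hc : 2 < w.card) : 1 ∉ w := by
  intro h1
  obtain ⟨x, hx, hx1⟩ := Finset.exists_mem_ne (s := w) (by omega) 1
  have hsubn := hI.1.1 _ (gens_subset' hw)
  have hx2 : 2 ≤ x := by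
    have := (Finset.mem_Icc.1 (hsubn hx)).1; omega
  have hxn : x ≤ n := (Finset.mem_Icc.1 (hsubn hx)).2
  have hmem := hpairs x hx2 hxn
  have hsub : ({1, x} : Finset ℕ) ⊆ w := by
    intro a ha
    simp only [Finset.mem_insert, Finset.mem_singleton] at ha
    rcases ha with rfl | rfl
    · exact h1
    · exact hx
  have := (mem_gens_iff'.1 hw).2 _ hmem hsub
  have hcd : ({1, x} : Finset ℕ).card = 2 := Finset.card_pair (show (1:ℕ) ≠ x by omega)
  rw [this] at hcd
  omega

end AuxCorners2

/-- for `n ≥ 5`, a squarefree strongly stable ideal of `K[x_1,…,x_n]` of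
initial degree `2` with a corner in degree `2` has at most `n-3` corners. -/
theorem corners_le_of_indeg_two (n : ℕ) (hn : 5 ≤ n) (I : Finset (Finset ℕ))
    (hI : IsSqStronglyStable n I)
    (hindeg : ∀ u ∈ I, 2 ≤ u.card) (hindeg' : ∃ u ∈ I, u.card = 2)
    (hcor : ∃ k : ℕ, 1 ≤ k ∧ (k, 2) ∈ corners I) :
    (corners I).Finite ∧ (corners I).ncard ≤ n - 3 := by
  have h12 : ({1, 2} : Finset ℕ) ∈ I := pair_one_two_mem hI hindeg hindeg'
  have hshape : ∀ p ∈ corners I, 1 ≤ p.1 ∧ 2 ≤ p.2 ∧ p.1 + p.2 ≤ n :=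
    fun p hp => corner_shape hI hindeg h12 hcor hp
  have hfin : (corners I).Finite := by
    apply Set.Finite.subset (Finset.Icc 1 n ×ˢ Finset.Icc 2 n : Finset (ℕ × ℕ)).finite_toSet
    intro p hp
    obtain ⟨h1, h2, h3⟩ := hshape p hp
    simp only [Finset.coe_product, Set.mem_prod, Finset.mem_coe, Finset.mem_Icc]
    omega
  refine ⟨hfin, ?_⟩
  by_contra hle
  push_neg at hle
  -- the second coordinates of corners are pairwise distinct
  have hinj : Set.InjOn Prod.snd (corners I) := by
    intro p hp q hq h
    rcases le_total p.1 q.1 with h' | h'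
    · exact corners_antichain hp hq h' h.le
    · exact (corners_antichain hq hp h' h.ge).symm
  have himsub : Prod.snd '' corners I ⊆ ↑(Finset.Icc 2 (n - 1)) := by
    rintro _ ⟨p, hp, rfl⟩
    obtain ⟨h1, h2, h3⟩ := hshape p hp
    simp only [Finset.mem_coe, Finset.mem_Icc]
    omega
  have himcard : (Prod.snd '' corners I).ncard = (corners I).ncard :=
    Set.ncard_image_of_injOn hinj
  have hIcc : (↑(Finset.Icc 2 (n - 1)) : Set ℕ).ncard = n - 2 := by
    rw [Set.ncard_coe_finset, Nat.card_Icc]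
    omega
  have him : Prod.snd '' corners I = ↑(Finset.Icc 2 (n - 1)) := by
    apply Set.eq_of_subset_of_ncard_le himsub (by omega) (Finset.finite_toSet _)
  have hex : ∀ l, 2 ≤ l → l ≤ n - 1 → ∃ p ∈ corners I, p.2 = l := by
    intro l h2 h3
    have hl : l ∈ (↑(Finset.Icc 2 (n - 1)) : Set ℕ) := by
      simp only [Finset.mem_coe, Finset.mem_Icc]; omega
    rw [← him] at hl
    obtain ⟨p, hp, hpl⟩ := hl
    exact ⟨p, hp, hpl⟩
  -- the first coordinates strictly decrease as the degree increases
  have hchain : ∀ j, j ≤ n - 3 → ∀ p ∈ corners I, p.2 = n - 1 - j → 1 + j ≤ p.1 := by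
    intro j
    induction j with
    | zero => intro _ p hp _; have := (hshape p hp).1; omega
    | succ j ih =>
      intro hj p hp hpl
      obtain ⟨q, hq, hql⟩ := hex (n - 1 - j) (by omega) (by omega)
      have hq1 := ih (by omega) q hq hql
      have hlt : q.1 < p.1 := by
        by_contra hge
        push_neg at hge
        have heq := corners_antichain hp hq hge (by omega)
        rw [heq] at hpl
        omega
      omega
  -- the corner in degree 2 is (n-2, 2)
  obtain ⟨p2, hp2, hp2l⟩ := hex 2 le_rfl (by omega)
  have hp2k : p2.1 = n - 2 := by
    have h1 := hchain (n - 3) le_rfl p2 hp2 (by omega)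
    have h2 := (hshape p2 hp2).2.2
    omega
  -- a degree-2 generator with maximum n
  obtain ⟨u2, hu2, hu2c, hu2m⟩ := exists_gen_of_betti_ne hp2.1
  rw [hp2l] at hu2c
  rw [hp2k, hp2l] at hu2m
  have hu2sub := hI.1.1 _ (gens_subset' hu2)
  have hu2mn : mmax u2 ≤ n := mmax_le' fun a ha => (Finset.mem_Icc.1 (hu2sub ha)).2
  have hu2mm : mmax u2 = n := by
    have := card_le_mmax' hu2sub
    omega
  have hnu2 : n ∈ u2 := by
    obtain ⟨b, hb, hbe⟩ := Finset.exists_mem_eq_sup u2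
      (Finset.card_pos.1 (by omega)) id
    have : mmax u2 = b := hbe
    rw [hu2mm] at this
    rwa [← this] at hb
  -- every pair {1, x} with 2 ≤ x ≤ n lies in I
  have h1n : ({1, n} : Finset ℕ) ∈ I := by
    obtain ⟨a, b, hab, hu2e⟩ := Finset.card_eq_two.1 hu2c
    rw [hu2e] at hnu2
    simp only [Finset.mem_insert, Finset.mem_singleton] at hnu2
    have huI := gens_subset' hu2
    rcases hnu2 with rfl | rfl
    · -- u2 = {n, b}
      rw [hu2e] at huI
      rw [Finset.pair_comm] at huI
      have hbmem : b ∈ Finset.Icc 1 n := hI.1.1 _ huI (by simp)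
      have hb1 : 1 ≤ b := (Finset.mem_Icc.1 hbmem).1
      have hbn : b < n := by
        have := (Finset.mem_Icc.1 hbmem).2
        omega
      exact one_pair_mem hI hindeg huI hbn hb1
    · -- u2 = {a, n}
      rw [hu2e] at huI
      have hamem : a ∈ Finset.Icc 1 n := hI.1.1 _ huI (by simp)
      have ha1 : 1 ≤ a := (Finset.mem_Icc.1 hamem).1
      have han : a < n := by
        have := (Finset.mem_Icc.1 hamem).2
        omega
      exact one_pair_mem hI hindeg huI han ha1
  have hpairs : ∀ x, 2 ≤ x → x ≤ n → ({1, x} : Finset ℕ) ∈ I := by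
    intro x hx2 hxn
    rcases eq_or_lt_of_le hxn with rfl | hlt
    · exact h1n
    · have := pair_swap_mem hI hindeg (a := n) (b := 1) (j := x)
        (by rwa [Finset.pair_comm]) (by omega) (by omega) hlt (by omega)
      rwa [Finset.pair_comm] at this
  -- the corner in degree n-1 yields the generator Icc 2 n
  obtain ⟨p1, hp1, hp1l⟩ := hex (n - 1) (by omega) le_rfl
  obtain ⟨u', hu', hu'c, _⟩ := exists_gen_of_betti_ne hp1.1
  rw [hp1l] at hu'c
  have h1u' : 1 ∉ u' := not_one_mem_gen hI hpairs hu' (by omega)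
  have hu'sub := hI.1.1 _ (gens_subset' hu')
  have hu'eq : u' = Finset.Icc 2 n := by
    apply Finset.eq_of_subset_of_card_le
    · intro a ha
      have h1 := Finset.mem_Icc.1 (hu'sub ha)
      have : a ≠ 1 := fun h => h1u' (h ▸ ha)
      rw [Finset.mem_Icc]
      omega
    · rw [Nat.card_Icc, hu'c]
      omega
  -- the corner in degree 3 yields a generator inside Icc 2 n, contradiction
  obtain ⟨p3, hp3, hp3l⟩ := hex 3 (by omega) (by omega)
  obtain ⟨w, hw, hwc, _⟩ := exists_gen_of_betti_ne hp3.1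
  rw [hp3l] at hwc
  have h1w : 1 ∉ w := not_one_mem_gen hI hpairs hw (by omega)
  have hwsub := hI.1.1 _ (gens_subset' hw)
  have hwu' : w ⊆ u' := by
    rw [hu'eq]
    intro a ha
    have h1 := Finset.mem_Icc.1 (hwsub ha)
    have : a ≠ 1 := fun h => h1w (h ▸ ha)
    rw [Finset.mem_Icc]
    omega
  have := (mem_gens_iff'.1 hu').2 w (gens_subset' hw) hwu'
  rw [this] at hwc
  omega
end
end

section
/- Let n ≥ 5, let ℓ ≥ 3, and let I be a squarefree strongly stable ideal of S = K[x_1,…,x_n] of initial degree ℓ having a corner in degree ℓ (i.e. (k,ℓ) ∈ C(I) for some positive integer k). Then I has at most n−ℓ corners, i.e. |C(I)| ≤ n−ℓ. -/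
open Finset

noncomputable section

lemma corners_snd_inj {I : Finset (Finset ℕ)} {p q : ℕ × ℕ}
    (hp : p ∈ corners I) (hq : q ∈ corners I) (h : p.2 = q.2) : p = q := by
  obtain ⟨hp1, hp2⟩ := hp
  obtain ⟨hq1, hq2⟩ := hq
  rcases lt_trichotomy p.1 q.1 with h1 | h1 | h1
  · exact absurd (hp2 q.1 q.2 h1.le h.le (by simp [Prod.ext_iff]; omega)) hq1
  · exact Prod.ext h1 h
  · exact absurd (hq2 p.1 p.2 h1.le h.ge (by simp [Prod.ext_iff]; omega)) hp1

lemma corner_bounds {n l : ℕ} {I : Finset (Finset ℕ)}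
    (hI : IsSqStronglyStable n I) (hindeg : ∀ u ∈ I, l ≤ u.card)
    {p : ℕ × ℕ} (hp : p ∈ corners I) : l ≤ p.2 ∧ p.1 + p.2 ≤ n := by
  obtain ⟨hp1, -⟩ := hp
  obtain ⟨u, hu, hne⟩ := Finset.exists_ne_zero_of_sum_ne_zero hp1
  simp only [gensDeg, gens, Finset.mem_filter] at hu
  obtain ⟨⟨huI, -⟩, hcard⟩ := hu
  have hsub := hI.1.1 u huI
  have hm : mmax u ≤ n := Finset.sup_le fun a ha => (Finset.mem_Icc.mp (hsub ha)).2
  have hch : p.1 ≤ mmax u - p.2 := by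
    by_contra hlt
    exact hne (Nat.choose_eq_zero_of_lt (by omega))
  have hcn : u.card ≤ n := by
    have := Finset.card_le_card hsub
    simpa [Nat.card_Icc] using this
  have := hindeg u huI
  omega

lemma Icc_mem_of_indeg {n l : ℕ} {I : Finset (Finset ℕ)}
    (hI : IsSqStronglyStable n I) (hindeg : ∀ u ∈ I, l ≤ u.card) (hl1 : 1 ≤ l) :
    ∀ u ∈ I, u.card = l → Finset.Icc 1 l ∈ I := by
  have key : ∀ s : ℕ, ∀ u ∈ I, u.card = l → (∑ x ∈ u, x) = s → Finset.Icc 1 l ∈ I := by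
    intro s
    induction s using Nat.strong_induction_on with
    | _ s ih =>
      intro u hu hcard hsum
      have hgen : ∀ v ∈ I, v ⊆ u → v = u := fun v hv hsub =>
        Finset.eq_of_subset_of_card_le hsub (hcard ▸ hindeg v hv)
      by_cases hEq : u = Finset.Icc 1 l
      · exact hEq ▸ hu
      · have hns : ¬ Finset.Icc 1 l ⊆ u := by
          intro hsub
          exact hEq (Finset.eq_of_subset_of_card_le hsub (by simp [Nat.card_Icc, hcard])).symm
        obtain ⟨j, hjI, hjm⟩ := Finset.not_subset.mp hns
        have hj1 : 1 ≤ j := (Finset.mem_Icc.mp hjI).1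
        have hjl : j ≤ l := (Finset.mem_Icc.mp hjI).2
        have hex : ∃ i ∈ u, j < i := by
          by_contra hno
          push_neg at hno
          have hsub2 : u ⊆ Finset.Icc 1 (j - 1) := by
            intro i hi
            have h1 := Finset.mem_Icc.mp (hI.1.1 u hu hi)
            have h2 := hno i hi
            have h3 : i ≠ j := fun hij => hjm (hij ▸ hi)
            exact Finset.mem_Icc.mpr ⟨h1.1, by omega⟩
          have := Finset.card_le_card hsub2
          simp [Nat.card_Icc, hcard] at this
          omega
        obtain ⟨i, hi, hji⟩ := hex
        have humem : u ∈ gens I := Finset.mem_filter.mpr ⟨hu, hgen⟩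
        have hv : insert j (u.erase i) ∈ I := hI.2 u humem i hi j hj1 hji hjm
        have hjne : j ∉ u.erase i := fun h => hjm (Finset.mem_of_mem_erase h)
        have hcv : (insert j (u.erase i)).card = l := by
          rw [Finset.card_insert_of_notMem hjne, Finset.card_erase_of_mem hi, hcard]
          omega
        have hsv : (∑ x ∈ insert j (u.erase i), x) = j + ∑ x ∈ u.erase i, x :=
          Finset.sum_insert hjne
        have hstot : i + ∑ x ∈ u.erase i, x = s := by
          rw [← hsum]; exact Finset.add_sum_erase u id hi
        exact ih (j + ∑ x ∈ u.erase i, x) (by omega) _ hv hcv hsv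
  exact fun u hu hc => key (∑ x ∈ u, x) u hu hc rfl

/-- for `n ≥ 5` and `ℓ ≥ 3`, a squarefree strongly stable ideal of
`K[x_1,…,x_n]` of initial degree `ℓ` with a corner in degree `ℓ` has at most `n-ℓ`
corners. -/
theorem corners_le_of_indeg (n l : ℕ) (hn : 5 ≤ n) (hl : 3 ≤ l)
    (I : Finset (Finset ℕ)) (hI : IsSqStronglyStable n I)
    (hindeg : ∀ u ∈ I, l ≤ u.card) (hindeg' : ∃ u ∈ I, u.card = l)
    (hcor : ∃ k : ℕ, 1 ≤ k ∧ (k, l) ∈ corners I) :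
    (corners I).Finite ∧ (corners I).ncard ≤ n - l := by
  obtain ⟨k, hk1, hkc⟩ := hcor
  obtain ⟨u0, hu0, hu0c⟩ := hindeg'
  have hIccl : Finset.Icc 1 l ∈ I := Icc_mem_of_indeg hI hindeg (by omega) u0 hu0 hu0c
  have hb : ∀ p ∈ corners I, l ≤ p.2 ∧ p.1 + p.2 ≤ n := fun p hp =>
    corner_bounds hI hindeg hp
  have hpos : ∀ p ∈ corners I, 1 ≤ p.1 := by
    intro p hp
    by_contra h0
    have hp1 : p.1 = 0 := by omega
    have hl2 : l ≤ p.2 := (hb p hp).1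
    rcases eq_or_lt_of_le hl2 with hEq | hlt
    · have hpe : p = (k, l) := corners_snd_inj hp hkc (by simp [← hEq])
      rw [hpe] at hp1
      simp at hp1
      omega
    · obtain ⟨hpb, hpext⟩ := hp
      have h1 : betti I 1 p.2 = 0 :=
        hpext 1 p.2 (by omega) le_rfl (by simp [Prod.ext_iff]; omega)
      obtain ⟨u, hu, -⟩ := Finset.exists_ne_zero_of_sum_ne_zero hpb
      have hmu : mmax u - p.2 = 0 := by
        have := (Finset.sum_eq_zero_iff.mp h1) u hu
        simpa [Nat.choose_one_right] using this
      simp only [gensDeg, gens, Finset.mem_filter] at hu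
      obtain ⟨⟨huI, hmin⟩, hcard⟩ := hu
      have hsubn := hI.1.1 u huI
      have husub : u ⊆ Finset.Icc 1 p.2 := by
        intro a ha
        have h1a := (Finset.mem_Icc.mp (hsubn ha)).1
        have h2a : a ≤ mmax u := Finset.le_sup (f := id) ha
        exact Finset.mem_Icc.mpr ⟨h1a, by omega⟩
      have hueq : u = Finset.Icc 1 p.2 :=
        Finset.eq_of_subset_of_card_le husub (by simp [Nat.card_Icc, hcard])
      have hIs : Finset.Icc 1 l ⊆ u := by
        rw [hueq]; exact Finset.Icc_subset_Icc_right (by omega)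
      have := hmin (Finset.Icc 1 l) hIccl hIs
      rw [hueq] at this
      have hcards : (Finset.Icc 1 l).card = (Finset.Icc 1 p.2).card := by rw [this]
      simp [Nat.card_Icc] at hcards
      omega
  have hInj : Set.InjOn Prod.snd (corners I) := fun p hp q hq h =>
    corners_snd_inj hp hq h
  have hsub : Prod.snd '' corners I ⊆ ↑(Finset.Icc l (n - 1)) := by
    rintro x ⟨p, hp, rfl⟩
    simp only [Finset.coe_Icc, Set.mem_Icc]
    have h1 := hb p hp
    have h2 := hpos p hp
    omega
  have hfin : (corners I).Finite :=
    Set.Finite.of_finite_image ((Finset.Icc l (n - 1)).finite_toSet.subset hsub) hInj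
  refine ⟨hfin, ?_⟩
  calc (corners I).ncard = (Prod.snd '' corners I).ncard :=
        (Set.ncard_image_of_injOn hInj).symm
    _ ≤ (↑(Finset.Icc l (n - 1)) : Set ℕ).ncard :=
        Set.ncard_le_ncard hsub (Finset.finite_toSet _)
    _ ≤ n - l := by rw [Set.ncard_coe_finset, Nat.card_Icc]; omega
end
end

section
/- Let (k_1,ℓ_1) and (k_2,ℓ_2) be pairs of positive integers with k_1 > k_2, 2 ≤ ℓ_1 < ℓ_2 and k_i+ℓ_i ≤ n for i = 1,2. Let u be a squarefree monomial of S = K[x_1,…,x_n] of degree ℓ_1 with m(u) = k_1+ℓ_1, assume BShad(u)_{(k_2,ℓ_2)} is nonempty, and let v be the smallest element of BShad(u)_{(k_2,ℓ_2)} with respect to the squarefree lexicographic order. If Gap(v) ≠ ∅, then there exists a squarefree monomial w ∈ A^s(k_2,ℓ_2) with w ∉ BShad(u)_{(k_2,ℓ_2)}. -/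
open Finset

noncomputable section

lemma bmem_card (U : Finset (Finset ℕ)) (c : ℕ) (hU : ∀ t ∈ U, t.card = c) :
    ∀ z, BMem U z → z.card = c := by
  intro z hz
  induction hz with
  | base t ht => exact hU t ht
  | step t _ i hi j hj1 hji hjt ih =>
    have h1 : 1 ≤ t.card := Finset.card_pos.mpr ⟨i, hi⟩
    rw [Finset.card_insert_of_notMem (fun h => hjt (Finset.mem_of_mem_erase h)),
        Finset.card_erase_of_mem hi]
    omega

lemma card_of_shad_iter (n c : ℕ) (T : Set (Finset ℕ)) (hT : ∀ t ∈ T, t.card = c) :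
    ∀ m, ∀ z ∈ (shadS n)^[m] T, z.card = c + m := by
  intro m
  induction m with
  | zero => simpa using hT
  | succ m ih =>
    intro z hz
    rw [Function.iterate_succ_apply'] at hz
    obtain ⟨u', hu', i, hi, hiu, rfl⟩ := hz
    rw [Finset.card_insert_of_notMem hiu, ih u' hu']
    omega

/-- Key lemma: any monomial of degree `l2`, with all indices `≤ k2+l2`, different from
`Icc (k2+1) (k2+l2)`, is slex-bigger than it (the sInf of the symmetric difference
belongs to it). -/
lemma sInf_symmDiff_mem (k2 l2 : ℕ) (hl2 : 1 ≤ l2) (v : Finset ℕ)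
    (hvcard : v.card = l2) (hvle : ∀ b ∈ v, b ≤ k2 + l2)
    (hne : v ≠ Finset.Icc (k2+1) (k2+l2)) :
    sInf {a : ℕ | a ∈ symmDiff v (Finset.Icc (k2+1) (k2+l2))} ∈ v := by
  set w := Finset.Icc (k2+1) (k2+l2) with hw
  have hSne : {a : ℕ | a ∈ symmDiff v w}.Nonempty := by
    have h : symmDiff v w ≠ ⊥ := fun h => hne (symmDiff_eq_bot.mp h)
    obtain ⟨a, ha⟩ := Finset.nonempty_iff_ne_empty.mpr (by simp only [← Finset.bot_eq_empty]; exact h)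
    exact ⟨a, ha⟩
  have ha := Nat.sInf_mem hSne
  set a := sInf {a : ℕ | a ∈ symmDiff v w} with hadef
  rw [Set.mem_setOf_eq, Finset.mem_symmDiff] at ha
  rcases ha with ⟨hav, _⟩ | ⟨haw, hav⟩
  · exact hav
  · exfalso
    have haw' : k2 + 1 ≤ a ∧ a ≤ k2 + l2 := by rwa [hw, Finset.mem_Icc] at haw
    have hsub : v ⊆ w.erase a := by
      intro b hb
      rcases lt_trichotomy b a with hba | hba | hba
      · have : b ∉ {a : ℕ | a ∈ symmDiff v w} := Nat.notMem_of_lt_sInf hba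
        rw [Set.mem_setOf_eq, Finset.mem_symmDiff] at this
        have hbw : b ∈ w := by tauto
        exact Finset.mem_erase.mpr ⟨by omega, hbw⟩
      · exact absurd (hba ▸ hb) hav
      · refine Finset.mem_erase.mpr ⟨by omega, ?_⟩
        rw [hw, Finset.mem_Icc]
        exact ⟨by omega, hvle b hb⟩
    have hle := Finset.card_le_card hsub
    rw [Finset.card_erase_of_mem haw, hw, Nat.card_Icc] at hle
    omega

/-- with `(k₁,ℓ₁)`, `(k₂,ℓ₂)` as below and `u` a squarefree monomial of
degree `ℓ₁` with `m(u) = k₁+ℓ₁`, if `v` is the slex-smallest element of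
`BShad(u)_{(k₂,ℓ₂)}` and `Gap(v) ≠ ∅`, then some `w ∈ A^s(k₂,ℓ₂)` lies outside
`BShad(u)_{(k₂,ℓ₂)}`. -/
theorem exists_outside_bshad (n k1 l1 k2 l2 : ℕ) (hk2 : 1 ≤ k2) (hk : k2 < k1)
    (hl1 : 2 ≤ l1) (hl : l1 < l2) (h1 : k1 + l1 ≤ n) (h2 : k2 + l2 ≤ n)
    (u : Finset ℕ) (hu : u ⊆ Finset.Icc 1 n) (hcard : u.card = l1)
    (hm : mmax u = k1 + l1)
    (v : Finset ℕ) (hv : v ∈ bshad n l1 k2 l2 {u})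
    (hvmin : ∀ z ∈ bshad n l1 k2 l2 {u}, slexGE z v)
    (hgap : (gapSet v).Nonempty) :
    ∃ w ∈ Asf n k2 l2, w ∉ bshad n l1 k2 l2 {u} := by
  set w := Finset.Icc (k2+1) (k2+l2) with hw
  have hwcard : w.card = l2 := by rw [hw, Nat.card_Icc]; omega
  have hwmax : mmax w = k2 + l2 := by
    apply le_antisymm
    · exact Finset.sup_le fun b hb => by rw [hw, Finset.mem_Icc] at hb; exact hb.2
    · exact Finset.le_sup (f := id) (by rw [hw, Finset.mem_Icc]; omega)
  have hvcard : v.card = l2 := by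
    have := card_of_shad_iter n l1 {z | BMem {u} z}
      (fun t ht => bmem_card {u} l1 (by simpa using hcard) t ht) (l2 - l1) v hv.1
    omega
  have hvle : ∀ b ∈ v, b ≤ k2 + l2 :=
    fun b hb => le_trans (Finset.le_sup (f := id) hb) hv.2
  refine ⟨w, ?_, ?_⟩
  · rw [Asf, Finset.mem_filter, Finset.mem_powerset]
    refine ⟨fun b hb => ?_, hwcard, hwmax⟩
    rw [hw, Finset.mem_Icc] at hb
    rw [Finset.mem_Icc]
    omega
  · intro hwmem
    have hne : v ≠ w := by
      intro h
      obtain ⟨a, ha⟩ := hgap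
      rw [h] at ha
      rw [gapSet, Finset.mem_filter, hwmax, hw, Finset.mem_Icc, Finset.mem_Icc] at ha
      omega
    rcases hvmin w hwmem with h | h
    · exact hne h.symm
    · obtain ⟨-, hmem⟩ := h
      have hkey := sInf_symmDiff_mem k2 l2 (by omega) v hvcard hvle (hw ▸ hne)
      rw [symmDiff_comm, ← hw] at hkey
      have hSne : {a : ℕ | a ∈ symmDiff w v}.Nonempty := by
        have h : symmDiff w v ≠ ⊥ := fun h => hne (symmDiff_eq_bot.mp h).symm
        obtain ⟨a, ha⟩ := Finset.nonempty_iff_ne_empty.mpr (by simp only [← Finset.bot_eq_empty]; exact h)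
        exact ⟨a, ha⟩
      have hd := Nat.sInf_mem hSne
      rw [Set.mem_setOf_eq, Finset.mem_symmDiff] at hd
      tauto
end
end

section
/- Let (k_1,ℓ_1) and (k_2,ℓ_2) be pairs of positive integers with k_1 > k_2, 2 ≤ ℓ_1 < ℓ_2 and k_i+ℓ_i ≤ n for i = 1,2, and let u = x_{i_1}···x_{i_{ℓ_1}} ∈ A^s(k_1,ℓ_1). Assume some element of supp(u) is smaller than k_2+ℓ_2; let i_t be the greatest element of supp(u) with i_t < k_2+ℓ_2, set ū = x_{i_1}···x_{i_t}, and let j_1 < j_2 < ··· < j_{ℓ_2−t} be the ℓ_2−t greatest integers in {1,…,k_2+ℓ_2} \ supp(ū). Then the smallest element of BShad(u)_{(k_2,ℓ_2)} with respect to the squarefree lexicographic order is the monomial x_{j_1}···x_{j_{ℓ_2−t}}·ū, and this monomial belongs to A^s(k_2,ℓ_2). -/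
open Finset

noncomputable section

section Aux

lemma card_filter_le_of_step (cur : Finset ℕ) (i j m : ℕ) (hi : i ∈ cur) (hj : j ∉ cur)
    (hji : j < i) :
    (cur.filter (· ≤ m)).card ≤ ((insert j (cur.erase i)).filter (· ≤ m)).card := by
  rw [Finset.filter_insert, Finset.filter_erase]
  by_cases hjm : j ≤ m
  · rw [if_pos hjm]
    by_cases him : i ≤ m
    · have hmem : i ∈ cur.filter (· ≤ m) := Finset.mem_filter.2 ⟨hi, him⟩
      rw [Finset.card_insert_of_notMem (by simp [Finset.mem_erase, hj]),
        Finset.card_erase_of_mem hmem]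
      have : 0 < (cur.filter (· ≤ m)).card := Finset.card_pos.2 ⟨i, hmem⟩
      omega
    · rw [Finset.erase_eq_of_notMem (by simp [him]),
        Finset.card_insert_of_notMem (by simp [hj])]
      omega
  · have him : ¬ i ≤ m := by omega
    rw [if_neg hjm, Finset.erase_eq_of_notMem (by simp [him])]

lemma bmem_card_s14 {u w : Finset ℕ} (h : BMem {u} w) : w.card = u.card := by
  induction h with
  | base v hv => rw [Finset.mem_singleton] at hv; rw [hv]
  | step v _ i hiv j _ hji hjv ih =>
    rw [Finset.card_insert_of_notMem (by simp [Finset.mem_erase, hjv]),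
      Finset.card_erase_of_mem hiv]
    have : 0 < v.card := Finset.card_pos.2 ⟨i, hiv⟩
    omega

lemma bmem_pos {u w : Finset ℕ} (hu : ∀ x ∈ u, 1 ≤ x) (h : BMem {u} w) :
    ∀ x ∈ w, 1 ≤ x := by
  induction h with
  | base v hv => rw [Finset.mem_singleton] at hv; subst hv; exact hu
  | step v _ i hiv j hj1 hji hjv ih =>
    intro x hx
    rcases Finset.mem_insert.1 hx with rfl | hx
    · exact hj1
    · exact ih x (Finset.mem_of_mem_erase hx)

lemma bmem_dom {u w : Finset ℕ} (h : BMem {u} w) :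
    ∀ m, (u.filter (· ≤ m)).card ≤ (w.filter (· ≤ m)).card := by
  induction h with
  | base v hv => rw [Finset.mem_singleton] at hv; subst hv; exact fun m => le_refl _
  | step v _ i hiv j hj1 hji hjv ih =>
    intro m
    exact le_trans (ih m) (card_filter_le_of_step v i j m hiv hjv hji)

lemma dom_step (cur w : Finset ℕ) (i j : ℕ) (hi : i ∈ cur) (hj : j ∉ cur) (hji : j < i)
    (hjw : j ∈ w) (hsub : ∀ x ∈ cur, x < i → x ∈ w)
    (hdom : ∀ m, (cur.filter (· ≤ m)).card ≤ (w.filter (· ≤ m)).card) :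
    ∀ m, ((insert j (cur.erase i)).filter (· ≤ m)).card ≤ (w.filter (· ≤ m)).card := by
  intro m
  rw [Finset.filter_insert, Finset.filter_erase]
  by_cases hjm : j ≤ m
  · rw [if_pos hjm]
    by_cases him : i ≤ m
    · have hmem : i ∈ cur.filter (· ≤ m) := Finset.mem_filter.2 ⟨hi, him⟩
      rw [Finset.card_insert_of_notMem (by simp [Finset.mem_erase, hj]),
        Finset.card_erase_of_mem hmem]
      have := hdom m
      have : 0 < (cur.filter (· ≤ m)).card := Finset.card_pos.2 ⟨i, hmem⟩
      omega
    · rw [Finset.erase_eq_of_notMem (by simp [him])]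
      have hsub2 : insert j (cur.filter (· ≤ m)) ⊆ w.filter (· ≤ m) := by
        intro x hx
        rcases Finset.mem_insert.1 hx with rfl | hx
        · exact Finset.mem_filter.2 ⟨hjw, hjm⟩
        · rcases Finset.mem_filter.1 hx with ⟨hx1, hx2⟩
          exact Finset.mem_filter.2 ⟨hsub x hx1 (by omega), hx2⟩
      have h1 := Finset.card_le_card hsub2
      rw [Finset.card_insert_of_notMem (by simp [hj])] at h1 ⊢
      exact h1
  · have him : ¬ i ≤ m := by omega
    rw [if_neg hjm, Finset.erase_eq_of_notMem (by simp [him])]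
    exact hdom m

lemma bmem_of_dom (u : Finset ℕ) :
    ∀ (s : ℕ) (cur w : Finset ℕ), cur.sum id ≤ s → BMem {u} cur →
      w.card = cur.card → (∀ x ∈ w, 1 ≤ x) →
      (∀ m, (cur.filter (· ≤ m)).card ≤ (w.filter (· ≤ m)).card) →
      BMem {u} w := by
  intro s
  induction s using Nat.strong_induction_on with
  | _ s ih =>
  intro cur w hs hcur hcard hpos hdom
  by_cases hwc : w = cur
  · exact hwc ▸ hcur
  have hnecw : (cur \ w).Nonempty := by
    rw [Finset.sdiff_nonempty]
    intro hsubcw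
    exact hwc (Finset.eq_of_subset_of_card_le hsubcw (le_of_eq hcard)).symm
  set i := (cur \ w).min' hnecw with hidef
  have hics : i ∈ cur \ w := (cur \ w).min'_mem hnecw
  have hic : i ∈ cur := (Finset.mem_sdiff.1 hics).1
  have hiw : i ∉ w := (Finset.mem_sdiff.1 hics).2
  have hlt : ∀ x ∈ cur, x < i → x ∈ w := by
    intro x hx hxi
    by_contra hxw
    have : i ≤ x := Finset.min'_le _ x (Finset.mem_sdiff.2 ⟨hx, hxw⟩)
    omega
  have hj : ∃ j ∈ w, j ≤ i ∧ j ∉ cur := by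
    by_contra hcon
    push_neg at hcon
    have hsubw : w.filter (· ≤ i) ⊆ (cur.filter (· ≤ i)).erase i := by
      intro x hx
      rcases Finset.mem_filter.1 hx with ⟨hxw, hxi⟩
      refine Finset.mem_erase.2 ⟨?_, Finset.mem_filter.2 ⟨hcon x hxw hxi, hxi⟩⟩
      rintro rfl; exact hiw hxw
    have hmem : i ∈ cur.filter (· ≤ i) := Finset.mem_filter.2 ⟨hic, le_refl i⟩
    have h1 := Finset.card_le_card hsubw
    rw [Finset.card_erase_of_mem hmem] at h1
    have h2 := hdom i
    have h3 : 0 < (cur.filter (· ≤ i)).card := Finset.card_pos.2 ⟨i, hmem⟩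
    omega
  obtain ⟨j, hjw, hji, hjc⟩ := hj
  have hjilt : j < i := lt_of_le_of_ne hji (by rintro rfl; exact hjc hic)
  have hcur' : BMem {u} (insert j (cur.erase i)) :=
    BMem.step cur hcur i hic j (hpos j hjw) hjilt hjc
  have hje : j ∉ cur.erase i := fun h => hjc (Finset.mem_of_mem_erase h)
  have hsum1 : (cur.erase i).sum id + i = cur.sum id :=
    Finset.sum_erase_add cur id hic
  have hsum2 : (insert j (cur.erase i)).sum id = j + (cur.erase i).sum id :=
    Finset.sum_insert hje
  have hile : i ≤ cur.sum id := Finset.single_le_sum (f := id) (fun _ _ => Nat.zero_le _) hic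
  have hslt : (insert j (cur.erase i)).sum id < s := by omega
  refine ih _ hslt (insert j (cur.erase i)) w (le_refl _) hcur' ?_ hpos
    (dom_step cur w i j hic hjc hjilt hjw hlt hdom)
  rw [Finset.card_insert_of_notMem hje, Finset.card_erase_of_mem hic]
  have : 0 < cur.card := Finset.card_pos.2 ⟨i, hic⟩
  omega

lemma mem_iter_shad (n : ℕ) : ∀ (d : ℕ) (T : Set (Finset ℕ)) (w v : Finset ℕ),
    w ∈ T → w ⊆ v → v.card = w.card + d → v ⊆ Finset.Icc 1 n →
    v ∈ (shadS n)^[d] T := by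
  intro d
  induction d with
  | zero =>
    intro T w v hw hsub hcard _
    have : w = v := Finset.eq_of_subset_of_card_le hsub (by omega)
    subst this; exact hw
  | succ d ih =>
    intro T w v hw hsub hcard hicc
    have hnevw : (v \ w).Nonempty := by
      rw [Finset.sdiff_nonempty]
      intro hvw
      have := Finset.card_le_card hvw
      omega
    obtain ⟨x, hx⟩ := hnevw
    rw [Finset.mem_sdiff] at hx
    rw [Function.iterate_succ_apply']
    refine ⟨v.erase x, ?_, x, hicc hx.1, Finset.notMem_erase x v,
      (Finset.insert_erase hx.1).symm⟩
    exact ih T w (v.erase x) hw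
      (fun y hy => Finset.mem_erase.2 ⟨by rintro rfl; exact hx.2 hy, hsub hy⟩)
      (by rw [Finset.card_erase_of_mem hx.1]; omega)
      (fun y hy => hicc (Finset.mem_of_mem_erase hy))

lemma iter_shad_forward (n : ℕ) : ∀ (d : ℕ) (T : Set (Finset ℕ)) (z : Finset ℕ),
    z ∈ (shadS n)^[d] T →
    ∃ w ∈ T, w ⊆ z ∧ z.card = w.card + d ∧ ∀ x ∈ z, x ∈ w ∨ 1 ≤ x := by
  intro d
  induction d with
  | zero =>
    intro T z hz
    exact ⟨z, hz, subset_rfl, rfl, fun x hx => Or.inl hx⟩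
  | succ d ih =>
    intro T z hz
    rw [Function.iterate_succ_apply'] at hz
    obtain ⟨z', hz', i, hiIcc, hiz', rfl⟩ := hz
    obtain ⟨w, hwT, hwz, hcard, hel⟩ := ih T z' hz'
    refine ⟨w, hwT, fun y hy => Finset.mem_insert_of_mem (hwz hy), ?_, ?_⟩
    · rw [Finset.card_insert_of_notMem hiz']; omega
    · intro x hx
      rcases Finset.mem_insert.1 hx with rfl | hx
      · exact Or.inr (Finset.mem_Icc.1 hiIcc).1
      · exact hel x hx

end Aux

/-- with `(k₁,ℓ₁)`, `(k₂,ℓ₂)` as below, `u ∈ A^s(k₁,ℓ₁)`,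
`ū = x_{i_1}⋯x_{i_t}` the part of `u` below `k₂+ℓ₂` (assumed nonempty), and
`J = {j_1 < ⋯ < j_{ℓ₂-t}}` the `ℓ₂ - t` greatest integers of `{1,…,k₂+ℓ₂} \ supp(ū)`,
the monomial `x_{j_1}⋯x_{j_{ℓ₂-t}}·ū` is the slex-smallest element of
`BShad(u)_{(k₂,ℓ₂)}` and belongs to `A^s(k₂,ℓ₂)`. -/
theorem min_bshad_eq (n k1 l1 k2 l2 : ℕ) (hk2 : 1 ≤ k2) (hk : k2 < k1)
    (hl1 : 2 ≤ l1) (hl : l1 < l2) (h1 : k1 + l1 ≤ n) (h2 : k2 + l2 ≤ n)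
    (u : Finset ℕ) (hu : u ∈ Asf n k1 l1)
    (ubar : Finset ℕ) (hub : ubar = u.filter fun a => a < k2 + l2)
    (hne : ubar.Nonempty)
    (J : Finset ℕ)
    (hJsub : J ⊆ Finset.Icc 1 (k2 + l2) \ ubar)
    (hJcard : J.card = l2 - ubar.card)
    (hJtop : ∀ a ∈ J, ∀ b ∈ Finset.Icc 1 (k2 + l2) \ ubar, b ∉ J → b < a) :
    (J ∪ ubar ∈ bshad n l1 k2 l2 {u} ∧
        ∀ z ∈ bshad n l1 k2 l2 {u}, slexGE z (J ∪ ubar)) ∧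
      J ∪ ubar ∈ Asf n k2 l2 := by
  rw [Asf, Finset.mem_filter, Finset.mem_powerset] at hu
  obtain ⟨huIcc, hucard, humax⟩ := hu
  set K := k2 + l2 with hK
  have hupos : ∀ x ∈ u, 1 ≤ x := fun x hx => (Finset.mem_Icc.1 (huIcc hx)).1
  have hubu : ubar ⊆ u := by rw [hub]; exact Finset.filter_subset _ _
  have hubK : ∀ x ∈ ubar, x < K := by
    intro x hx; rw [hub] at hx; exact (Finset.mem_filter.1 hx).2
  have htle : ubar.card ≤ l1 := hucard ▸ Finset.card_le_card hubu
  have hJmem : ∀ x ∈ J, 1 ≤ x ∧ x ≤ K ∧ x ∉ ubar := by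
    intro x hx
    have h := hJsub hx
    rw [Finset.mem_sdiff, Finset.mem_Icc] at h
    exact ⟨h.1.1, h.1.2, h.2⟩
  have hdisj : Disjoint J ubar := by
    rw [Finset.disjoint_left]; intro x hx; exact (hJmem x hx).2.2
  have hKmem : K ∈ J := by
    by_contra hKJ
    have hJne : J.Nonempty := by
      rw [← Finset.card_pos, hJcard]; omega
    obtain ⟨a, ha⟩ := hJne
    have hKd : K ∈ Finset.Icc 1 K \ ubar := by
      rw [Finset.mem_sdiff, Finset.mem_Icc]
      exact ⟨⟨by omega, le_refl K⟩, fun h => lt_irrefl K (hubK K h)⟩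
    have h1 := hJtop a ha K hKd hKJ
    have h2 := (hJmem a ha).2.1
    omega
  have hv0card : (J ∪ ubar).card = l2 := by
    rw [Finset.card_union_of_disjoint hdisj, hJcard]; omega
  have hv0K : ∀ x ∈ J ∪ ubar, 1 ≤ x ∧ x ≤ K := by
    intro x hx
    rcases Finset.mem_union.1 hx with hx | hx
    · exact ⟨(hJmem x hx).1, (hJmem x hx).2.1⟩
    · exact ⟨hupos x (hubu hx), le_of_lt (hubK x hx)⟩
  have hv0Icc : J ∪ ubar ⊆ Finset.Icc 1 K := fun x hx =>
    Finset.mem_Icc.2 ⟨(hv0K x hx).1, (hv0K x hx).2⟩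
  have hv0Iccn : J ∪ ubar ⊆ Finset.Icc 1 n := fun x hx =>
    Finset.mem_Icc.2 ⟨(hv0K x hx).1, le_trans (hv0K x hx).2 h2⟩
  have hv0max : mmax (J ∪ ubar) = K := by
    apply le_antisymm
    · exact Finset.sup_le fun x hx => (hv0K x hx).2
    · exact Finset.le_sup (f := id) (Finset.mem_union_left _ hKmem)
  have hAsf : J ∪ ubar ∈ Asf n k2 l2 := by
    rw [Asf, Finset.mem_filter, Finset.mem_powerset]
    exact ⟨hv0Iccn, hv0card, hv0max⟩
  obtain ⟨X, hXJ, hXcard⟩ := Finset.exists_subset_card_eq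
    (show l1 - ubar.card ≤ J.card by rw [hJcard]; omega)
  have hdisjX : Disjoint ubar X := (hdisj.symm).mono_right hXJ
  have hwcard : (ubar ∪ X).card = l1 := by
    rw [Finset.card_union_of_disjoint hdisjX, hXcard]; omega
  have hwsub : ubar ∪ X ⊆ J ∪ ubar :=
    Finset.union_subset Finset.subset_union_right (hXJ.trans Finset.subset_union_left)
  have hwK : ∀ x ∈ ubar ∪ X, 1 ≤ x ∧ x ≤ K := fun x hx => hv0K x (hwsub hx)
  have hwdom : ∀ m, (u.filter (· ≤ m)).card ≤ ((ubar ∪ X).filter (· ≤ m)).card := by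
    intro m
    by_cases hm : m < K
    · have he : u.filter (· ≤ m) ⊆ ubar.filter (· ≤ m) := by
        intro x hx
        rcases Finset.mem_filter.1 hx with ⟨hx1, hx2⟩
        refine Finset.mem_filter.2 ⟨?_, hx2⟩
        rw [hub]; exact Finset.mem_filter.2 ⟨hx1, by omega⟩
      calc (u.filter (· ≤ m)).card ≤ (ubar.filter (· ≤ m)).card := Finset.card_le_card he
        _ ≤ ((ubar ∪ X).filter (· ≤ m)).card :=
          Finset.card_le_card (Finset.filter_subset_filter _ Finset.subset_union_left)
    · have he : (ubar ∪ X).filter (· ≤ m) = ubar ∪ X :=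
        Finset.filter_true_of_mem (fun x hx => by have := (hwK x hx).2; omega)
      rw [he, hwcard]
      calc (u.filter (· ≤ m)).card ≤ u.card := Finset.card_le_card (Finset.filter_subset _ _)
        _ = l1 := hucard
  have hwB : BMem {u} (ubar ∪ X) :=
    bmem_of_dom u (u.sum id) u (ubar ∪ X) (le_refl _) (BMem.base u (Finset.mem_singleton_self u))
      (by rw [hwcard, hucard]) (fun x hx => (hwK x hx).1) hwdom
  have hmem1 : J ∪ ubar ∈ bshad n l1 k2 l2 {u} := by
    refine ⟨?_, le_of_eq hv0max⟩
    exact mem_iter_shad n (l2 - l1) _ (ubar ∪ X) (J ∪ ubar) hwB hwsub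
      (by rw [hv0card, hwcard]; omega) hv0Iccn
  refine ⟨⟨hmem1, ?_⟩, hAsf⟩
  intro z hz
  obtain ⟨hz1, hz2⟩ := hz
  obtain ⟨w', hw'B, hw'z, hzcard, hel⟩ := iter_shad_forward n (l2 - l1) _ z hz1
  have hw'B : BMem {u} w' := hw'B
  have hzl2 : z.card = l2 := by rw [hzcard, bmem_card_s14 hw'B, hucard]; omega
  have hzK : ∀ x ∈ z, 1 ≤ x ∧ x ≤ K := by
    intro x hx
    constructor
    · rcases hel x hx with h | h
      · exact bmem_pos hupos hw'B x h
      · exact h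
    · exact le_trans (Finset.le_sup (f := id) hx) hz2
  have hzdom : ∀ m, (u.filter (· ≤ m)).card ≤ (z.filter (· ≤ m)).card := fun m =>
    le_trans (bmem_dom hw'B m) (Finset.card_le_card (Finset.filter_subset_filter _ hw'z))
  by_cases hzeq : z = J ∪ ubar
  · exact Or.inl hzeq
  refine Or.inr ⟨hzeq, ?_⟩
  have hSne : {a : ℕ | a ∈ symmDiff z (J ∪ ubar)}.Nonempty := by
    have hd : (symmDiff z (J ∪ ubar)).Nonempty := by
      rw [Finset.nonempty_iff_ne_empty]
      intro h
      exact hzeq (symmDiff_eq_bot.1 h)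
    exact ⟨hd.choose, hd.choose_spec⟩
  set m := sInf {a : ℕ | a ∈ symmDiff z (J ∪ ubar)} with hmdef
  have hmS : m ∈ symmDiff z (J ∪ ubar) := Nat.sInf_mem hSne
  have hmmin : ∀ x, x ∈ symmDiff z (J ∪ ubar) → m ≤ x := fun x hx => Nat.sInf_le hx
  have hagree : ∀ x, x < m → (x ∈ z ↔ x ∈ J ∪ ubar) := by
    intro x hx
    constructor
    · intro h; by_contra h2
      exact absurd (hmmin x (Finset.mem_symmDiff.2 (Or.inl ⟨h, h2⟩))) (by omega)
    · intro h; by_contra h2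
      exact absurd (hmmin x (Finset.mem_symmDiff.2 (Or.inr ⟨h, h2⟩))) (by omega)
  rcases Finset.mem_symmDiff.1 hmS with ⟨hmz, _⟩ | ⟨hmv, hmz⟩
  · exact hmz
  exfalso
  have hbJ : ∀ j ∈ J, ∀ b ∈ Finset.Icc 1 K \ (J ∪ ubar), b < j := by
    intro jj hjj b hb
    rw [Finset.mem_sdiff] at hb
    refine hJtop jj hjj b ?_ (fun h => hb.2 (Finset.mem_union_left _ h))
    exact Finset.mem_sdiff.2 ⟨hb.1, fun h => hb.2 (Finset.mem_union_right _ h)⟩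
  have hblt : ∀ b ∈ Finset.Icc 1 K \ (J ∪ ubar), b < m := by
    rcases Finset.mem_union.1 hmv with hmJ | hmub
    · exact fun b hb => hbJ m hmJ b hb
    · have hmuK : m ∈ u ∧ m < K := by
        rw [hub] at hmub; exact Finset.mem_filter.1 hmub
      have e1 : u.filter (· ≤ m) = ubar.filter (· ≤ m) := by
        ext x
        simp only [Finset.mem_filter]
        constructor
        · rintro ⟨h1, h2⟩
          refine ⟨?_, h2⟩
          rw [hub]; exact Finset.mem_filter.2 ⟨h1, by omega⟩
        · rintro ⟨h1, h2⟩
          exact ⟨hubu h1, h2⟩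
      have e2 : z.filter (· ≤ m) = z.filter (· < m) := by
        ext x
        simp only [Finset.mem_filter]
        constructor
        · rintro ⟨h1, h2⟩
          refine ⟨h1, ?_⟩
          rcases lt_or_eq_of_le h2 with h | h
          · exact h
          · exact absurd (h ▸ h1) hmz
        · rintro ⟨h1, h2⟩; exact ⟨h1, le_of_lt h2⟩
      have e3 : z.filter (· < m) = (J ∪ ubar).filter (· < m) := by
        ext x
        simp only [Finset.mem_filter]
        constructor
        · rintro ⟨h1, h2⟩; exact ⟨(hagree x h2).1 h1, h2⟩
        · rintro ⟨h1, h2⟩; exact ⟨(hagree x h2).2 h1, h2⟩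
      have e4 : (J ∪ ubar).filter (· < m) = J.filter (· < m) ∪ ubar.filter (· < m) :=
        Finset.filter_union _ _ _
      have e5 : ubar.filter (· ≤ m) = insert m (ubar.filter (· < m)) := by
        ext x
        simp only [Finset.mem_filter, Finset.mem_insert]
        constructor
        · rintro ⟨h1, h2⟩
          rcases lt_or_eq_of_le h2 with h | h
          · exact Or.inr ⟨h1, h⟩
          · exact Or.inl h
        · rintro (rfl | ⟨h1, h2⟩)
          · exact ⟨hmub, le_refl m⟩
          · exact ⟨h1, le_of_lt h2⟩
      have c1 := hzdom m
      rw [e1, e2, e3, e4, e5] at c1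
      rw [Finset.card_insert_of_notMem (by simp)] at c1
      have c2 := Finset.card_union_le (J.filter (· < m)) (ubar.filter (· < m))
      have hJlt : 0 < (J.filter (· < m)).card := by omega
      obtain ⟨jj, hjj⟩ := Finset.card_pos.1 hJlt
      rcases Finset.mem_filter.1 hjj with ⟨hjJ, hjm⟩
      intro b hb
      exact lt_trans (hbJ jj hjJ b hb) hjm
  have hMz : insert m (Finset.Icc 1 K \ (J ∪ ubar)) ⊆ Finset.Icc 1 K \ z := by
    intro x hx
    rcases Finset.mem_insert.1 hx with rfl | hx
    · exact Finset.mem_sdiff.2 ⟨hv0Icc hmv, hmz⟩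
    · have hx' := hx
      rw [Finset.mem_sdiff] at hx ⊢
      exact ⟨hx.1, fun h => hx.2 ((hagree x (hblt x hx')).1 h)⟩
  have hKcard : (Finset.Icc 1 K).card = K := by rw [Nat.card_Icc]; omega
  have hc1 : (Finset.Icc 1 K \ (J ∪ ubar)).card = k2 := by
    rw [Finset.card_sdiff_of_subset hv0Icc, hKcard, hv0card]; omega
  have hc2 : (Finset.Icc 1 K \ z).card = k2 := by
    rw [Finset.card_sdiff_of_subset (fun x hx => Finset.mem_Icc.2 ⟨(hzK x hx).1, (hzK x hx).2⟩),
      hKcard, hzl2]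
    omega
  have hmnot : m ∉ Finset.Icc 1 K \ (J ∪ ubar) := fun h => (Finset.mem_sdiff.1 h).2 hmv
  have hfin := Finset.card_le_card hMz
  rw [Finset.card_insert_of_notMem hmnot, hc1, hc2] at hfin
  omega
end
end

section
/- Let (k_1,ℓ_1) and (k_2,ℓ_2) be pairs of positive integers with k_1 > k_2, ℓ_1 < ℓ_2 and k_i+ℓ_i ≤ n for i = 1,2, and let u_1,…,u_r be squarefree monomials of S = K[x_1,…,x_n] of degree ℓ_1 with m(u_j) = k_1+ℓ_1 for all j. Then BShad(u_1,…,u_r)_{(k_2,ℓ_2)} is a squarefree strongly stable set of squarefree monomials of degree ℓ_2. -/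
open Finset

noncomputable section

lemma sss_shadS {n : ℕ} {T : Set (Finset ℕ)} (hT : IsSSSetS T) :
    IsSSSetS (shadS n T) := by
  rintro v ⟨u, hu, i0, hi0n, hi0u, rfl⟩ i hi j hj1 hji hjv
  have hji0 : j ≠ i0 := fun h => hjv (h ▸ Finset.mem_insert_self _ _)
  have hju : j ∉ u := fun h => hjv (Finset.mem_insert_of_mem h)
  by_cases hii0 : i = i0
  · subst hii0
    rw [Finset.erase_insert hi0u]
    exact ⟨u, hu, j,
      Finset.mem_Icc.mpr ⟨hj1, hji.le.trans (Finset.mem_Icc.mp hi0n).2⟩, hju, rfl⟩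
  · have hiu : i ∈ u := Finset.mem_of_mem_insert_of_ne hi hii0
    have hw : insert j (u.erase i) ∈ T := hT u hu i hiu j hj1 hji hju
    refine ⟨insert j (u.erase i), hw, i0, hi0n, ?_, ?_⟩
    · simp only [Finset.mem_insert, Finset.mem_erase]
      push_neg
      exact ⟨hji0.symm, fun _ => hi0u⟩
    · rw [Finset.erase_insert_of_ne (Ne.symm hii0), Finset.insert_comm]

lemma sss_shadS_iter {n m : ℕ} {T : Set (Finset ℕ)} (hT : IsSSSetS T) :
    IsSSSetS ((shadS n)^[m] T) := by
  induction m with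
  | zero => exact hT
  | succ m ih => rw [Function.iterate_succ_apply']; exact sss_shadS ih

lemma shadS_iter_card {n c m : ℕ} {T : Set (Finset ℕ)}
    (hT : ∀ u ∈ T, u ⊆ Finset.Icc 1 n ∧ u.card = c) :
    ∀ v ∈ (shadS n)^[m] T, v ⊆ Finset.Icc 1 n ∧ v.card = c + m := by
  induction m with
  | zero => simpa using hT
  | succ m ih =>
    rw [Function.iterate_succ_apply']
    rintro v ⟨u, hu, i, hin, hiu, rfl⟩
    obtain ⟨hs, hc⟩ := ih u hu
    exact ⟨Finset.insert_subset hin hs,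
      by rw [Finset.card_insert_of_notMem hiu, hc]; ring⟩

/-- with `(k₁,ℓ₁)`, `(k₂,ℓ₂)` as below and `u_1,…,u_r` squarefree
monomials of degree `ℓ₁` with `m(u_j) = k₁+ℓ₁`, the set `BShad(u_1,…,u_r)_{(k₂,ℓ₂)}`
is a squarefree strongly stable set of degree-`ℓ₂` squarefree monomials. -/
theorem bshad_sq_strongly_stable (n k1 l1 k2 l2 : ℕ) (hk2 : 1 ≤ k2) (hk : k2 < k1)
    (hl1 : 1 ≤ l1) (hl : l1 < l2) (h1 : k1 + l1 ≤ n) (h2 : k2 + l2 ≤ n)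
    (U : Finset (Finset ℕ))
    (hU : ∀ u ∈ U, u ⊆ Finset.Icc 1 n ∧ u.card = l1 ∧ mmax u = k1 + l1) :
    (∀ v ∈ bshad n l1 k2 l2 U, v ⊆ Finset.Icc 1 n ∧ v.card = l2) ∧
      IsSSSetS (bshad n l1 k2 l2 U) := by
  have hB : ∀ u, BMem U u → u ⊆ Finset.Icc 1 n ∧ u.card = l1 := by
    intro u hu
    induction hu with
    | base u hu => exact ⟨(hU u hu).1, (hU u hu).2.1⟩
    | step u _ i hi j hj1 hji hju ih =>
      obtain ⟨hs, hc⟩ := ih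
      have hil : i ≤ n := (Finset.mem_Icc.mp (hs hi)).2
      refine ⟨Finset.insert_subset (Finset.mem_Icc.mpr ⟨hj1, hji.le.trans hil⟩)
        ((Finset.erase_subset _ _).trans hs), ?_⟩
      rw [Finset.card_insert_of_notMem (fun h => hju (Finset.mem_of_mem_erase h)),
        Finset.card_erase_of_mem hi, hc]
      have : 1 ≤ u.card := Finset.card_pos.mpr ⟨i, hi⟩
      omega
  constructor
  · intro v hv
    obtain ⟨hs, hc⟩ := shadS_iter_card hB v hv.1
    exact ⟨hs, by omega⟩
  · intro v hv i hi j hj1 hji hjv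
    refine ⟨sss_shadS_iter (fun u hu i hi j hj1 hji hju =>
      BMem.step u hu i hi j hj1 hji hju) v hv.1 i hi j hj1 hji hjv, ?_⟩
    have hmm : mmax (insert j (v.erase i)) ≤ mmax v := by
      unfold mmax
      rw [Finset.sup_insert]
      exact sup_le (hji.le.trans (Finset.le_sup (f := id) hi))
        (Finset.sup_mono (Finset.erase_subset _ _))
    exact hmm.trans hv.2
end
end
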